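/- arXiv:2512.05357 — 5 statements merged into one kernel-verified Lean document; each statement's English description precedes it below -/
import Mathlib

section
/- Every finite preorder can be order-embedded into the asymptotic cohomomorphism preorder: for every preorder ≤_M on a finite set M there exists a map F from M to finite simple graphs such that for all x, y ∈ M, x ≤_M y if and only if F(x) ≲_𝒢 F(y). -/
open Filter

/-- A bundled finite simple graph. -/
structure FinGraph where
  V : Type
  [fintypeV : Fintype V]
  G : SimpleGraph V

attribute [instance] FinGraph.fintypeV

namespace FinGraph

/-- Helper constructor. -/
def mk' (V : Type) [Fintype V] (G : SimpleGraph V) : FinGraph := ⟨V, G⟩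

/-- Strong product of simple graphs. -/
def strongProdAdj {α β : Type} (G : SimpleGraph α) (H : SimpleGraph β) :
    SimpleGraph (α × β) where
  Adj x y := x ≠ y ∧ (G.Adj x.1 y.1 ∨ x.1 = y.1) ∧ (H.Adj x.2 y.2 ∨ x.2 = y.2)
  symm := by
    constructor
    rintro x y ⟨hne, h1, h2⟩
    refine ⟨hne.symm, ?_, ?_⟩
    · rcases h1 with h | h
      · exact Or.inl h.symm
      · exact Or.inr h.symm
    · rcases h2 with h | h
      · exact Or.inl h.symm
      · exact Or.inr h.symm
  loopless := by constructor; rintro x ⟨h, -⟩; exact h rfl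

/-- The `n`-th strong power of a simple graph, on vertex set `Fin n → α`. -/
def strongPowAdj {α : Type} (G : SimpleGraph α) (n : ℕ) : SimpleGraph (Fin n → α) where
  Adj x y := x ≠ y ∧ ∀ i, G.Adj (x i) (y i) ∨ x i = y i
  symm := by
    constructor
    rintro x y ⟨hne, h⟩
    refine ⟨hne.symm, fun i => ?_⟩
    rcases h i with h' | h'
    · exact Or.inl h'.symm
    · exact Or.inr h'.symm
  loopless := by constructor; rintro x ⟨h, -⟩; exact h rfl

/-- Disjoint union of simple graphs. -/
def disjUnionAdj {α β : Type} (G : SimpleGraph α) (H : SimpleGraph β) :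
    SimpleGraph (α ⊕ β) where
  Adj x y := (∃ a b, x = Sum.inl a ∧ y = Sum.inl b ∧ G.Adj a b) ∨
             (∃ a b, x = Sum.inr a ∧ y = Sum.inr b ∧ H.Adj a b)
  symm := by
    constructor
    rintro x y (⟨a, b, rfl, rfl, h⟩ | ⟨a, b, rfl, rfl, h⟩)
    · exact Or.inl ⟨b, a, rfl, rfl, h.symm⟩
    · exact Or.inr ⟨b, a, rfl, rfl, h.symm⟩
  loopless := by
    constructor
    rintro x (⟨a, b, rfl, h, hadj⟩ | ⟨a, b, rfl, h, hadj⟩)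
    · cases Sum.inl.inj h; exact hadj.ne rfl
    · cases Sum.inr.inj h; exact hadj.ne rfl

/-- Bundled strong product `G ⊠ H`. -/
def sprod (A B : FinGraph) : FinGraph := mk' (A.V × B.V) (strongProdAdj A.G B.G)

/-- Bundled `n`-th strong power `G^{⊠ n}`. -/
def spow (A : FinGraph) (n : ℕ) : FinGraph := mk' (Fin n → A.V) (strongPowAdj A.G n)

/-- Bundled disjoint union `G ⊔ H`. -/
def dUnion (A B : FinGraph) : FinGraph := mk' (A.V ⊕ B.V) (disjUnionAdj A.G B.G)

/-- Bundled complement graph. -/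
def compl (A : FinGraph) : FinGraph := mk' A.V A.Gᶜ

/-- Graph join `G + H`: the complement of the disjoint union of the complements. -/
def join (A B : FinGraph) : FinGraph := (A.compl.dUnion B.compl).compl

/-- The edgeless graph `E_n` on `n` vertices. -/
def edgeless (n : ℕ) : FinGraph := mk' (Fin n) ⊥

/-- `cohomLE A B`: there is a cohomomorphism from `A` to `B`, i.e. a graph homomorphism
from the complement of `A` to the complement of `B`. -/
def cohomLE (A B : FinGraph) : Prop := Nonempty (A.Gᶜ →g B.Gᶜ)

/-- Asymptotic cohomomorphism preorder: `A ≲ B` iff there is `f : ℕ → ℕ` with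
`f n / n → 0` and `A^{⊠ n} ≤ B^{⊠ (n + f n)}` for all `n`. -/
def asympCohomLE (A B : FinGraph) : Prop :=
  ∃ f : ℕ → ℕ, Tendsto (fun n => (f n : ℝ) / (n : ℝ)) atTop (nhds 0) ∧
    ∀ n, cohomLE (A.spow n) (B.spow (n + f n))

/-- The asymptotic spectrum of graphs `Δ(𝒢)`: nonnegative real graph parameters that are
normalised on edgeless graphs, multiplicative under the strong product, additive under
disjoint union, and monotone under cohomomorphism. -/
def Delta : Set (FinGraph → ℝ) :=
  { f | (∀ A, 0 ≤ f A) ∧ (∀ n : ℕ, f (edgeless n) = n) ∧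
        (∀ A B, f (A.sprod B) = f A * f B) ∧
        (∀ A B, f (A.dUnion B) = f A + f B) ∧
        (∀ A B, cohomLE A B → f A ≤ f B) }

/-- Vertex-transitivity of a bundled graph. -/
def IsVertexTransitive (A : FinGraph) : Prop :=
  ∀ u v : A.V, ∃ e : A.G ≃g A.G, e u = v

/-- Cyclic distance between `i, j ∈ {0, …, p-1}` modulo `p`. -/
def cycDist (p i j : ℕ) : ℕ := min ((p + i - j) % p) ((p + j - i) % p)

/-- The fraction graph `E_{p/q}`: vertex set `ℤ_p`, distinct vertices adjacent iff
their cyclic distance modulo `p` is strictly less than `q`. -/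
def fracGraph (p q : ℕ) : FinGraph :=
  mk' (Fin p)
    { Adj := fun i j => i ≠ j ∧ cycDist p i j < q
      symm := by
        constructor
        rintro i j ⟨hne, hd⟩
        exact ⟨hne.symm, by simpa [cycDist, min_comm] using hd⟩
      loopless := ⟨fun i h => h.1 rfl⟩ }

/-- The complement of the projective rank `ξ̄_f(G)`: the infimum of `d/r` over all
assignments of `r`-dimensional subspaces of `ℂ^d` to the vertices such that distinct
non-adjacent vertices receive orthogonal subspaces. -/
noncomputable def xibar (A : FinGraph) : ℝ :=
  sInf { x : ℝ | ∃ d r : ℕ, 0 < d ∧ 0 < r ∧ x = (d : ℝ) / (r : ℝ) ∧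
    ∃ W : A.V → Submodule ℂ (EuclideanSpace ℂ (Fin d)),
      (∀ v, Module.finrank ℂ (W v) = r) ∧
      ∀ v w : A.V, v ≠ w → ¬ A.G.Adj v w →
        ∀ x ∈ W v, ∀ y ∈ W w, (inner ℂ x y : ℂ) = 0 }

end FinGraph

open FinGraph



namespace AsympAux

open Finset

variable {F : Type} [Field F]

/-- `Phi a d t = ∑_{j ≤ d} a j * C(t,j)` in the field `F`. -/
def Phi (a : ℕ → F) (d t : ℕ) : F := ∑ j ∈ range (d+1), a j * (t.choose j : F)

lemma bin_identity (i t : ℕ) :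
    ((i+1 : ℕ) : F) * (t.choose (i+1) : F) + (i : F) * (t.choose i : F)
      = (t : F) * (t.choose i : F) := by
  rcases le_or_gt i t with h | h
  · have hc : (t.choose (i+1) * (i+1) : ℕ) = t.choose i * (t - i) := Nat.choose_succ_right_eq t i
    have h2 : ((t.choose (i+1) : F) * ((i:F)+1)) = (t.choose i : F) * ((t:F) - (i:F)) := by
      have := congrArg (fun n : ℕ => (n : F)) hc
      push_cast [Nat.cast_sub h] at this
      exact this
    push_cast
    linear_combination h2
  · rw [Nat.choose_eq_zero_of_lt h, Nat.choose_eq_zero_of_lt (Nat.lt_succ_of_lt h)]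
    simp

/-- Binomial-basis representation of `∏_{c ∈ R} (t - c)`. -/
lemma exists_coeffs_aux (R : Finset F) :
    ∃ a : ℕ → F, (∀ j, R.card < j → a j = 0) ∧
      ∀ t : ℕ, Phi a R.card t = ∏ c ∈ R, ((t : F) - c) := by
  classical
  induction R using Finset.induction with
  | empty =>
      refine ⟨fun j => if j = 0 then 1 else 0, ?_, ?_⟩
      · intro j hj
        simp only [card_empty] at hj
        simp [Nat.pos_iff_ne_zero.mp hj]
      · intro t; simp [Phi]
  | @insert c₀ R hc₀ ih =>
      obtain ⟨a, ha0, ha⟩ := ih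
      refine ⟨fun j => (j : F) * (if j = 0 then 0 else a (j-1)) + ((j : F) - c₀) * a j,
        ?_, ?_⟩
      · intro j hj
        rw [card_insert_of_notMem hc₀] at hj
        have h1 : R.card < j - 1 := by omega
        have h2 : R.card < j := by omega
        have hj0 : j ≠ 0 := by omega
        simp [hj0, ha0 _ h1, ha0 _ h2]
      · intro t
        rw [card_insert_of_notMem hc₀, prod_insert hc₀, ← ha t]
        -- expand
        unfold Phi
        rw [Finset.sum_congr rfl (fun j _ => by ring_nf :
          ∀ j ∈ range (R.card + 1 + 1),
            ((j : F) * (if j = 0 then 0 else a (j-1)) + ((j : F) - c₀) * a j) * (t.choose j : F)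
            = (j : F) * (if j = 0 then 0 else a (j-1)) * (t.choose j : F)
              + ((j : F) - c₀) * a j * (t.choose j : F))]
        rw [Finset.sum_add_distrib]
        have e1 : ∑ j ∈ range (R.card + 1 + 1),
            (j : F) * (if j = 0 then 0 else a (j-1)) * (t.choose j : F)
            = ∑ i ∈ range (R.card + 1), ((i+1 : ℕ) : F) * a i * (t.choose (i+1) : F) := by
          rw [Finset.sum_range_succ']
          simp
        have e2 : ∑ j ∈ range (R.card + 1 + 1), ((j : F) - c₀) * a j * (t.choose j : F)
            = ∑ j ∈ range (R.card + 1), ((j : F) - c₀) * a j * (t.choose j : F) := by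
          rw [Finset.sum_range_succ, ha0 _ (Nat.lt_succ_self _)]
          simp
        rw [e1, e2]
        have e3 : ∀ i ∈ range (R.card + 1),
            ((i+1 : ℕ) : F) * a i * (t.choose (i+1) : F) + ((i : F) - c₀) * a i * (t.choose i : F)
            = a i * ((t : F) * (t.choose i : F)) - c₀ * (a i * (t.choose i : F)) := by
          intro i _
          have := bin_identity (F := F) i t
          linear_combination a i * this
        rw [← Finset.sum_add_distrib, Finset.sum_congr rfl e3, Finset.sum_sub_distrib,
          ← Finset.mul_sum]
        have e4 : ∑ j ∈ range (R.card + 1), a j * ((t:F) * (t.choose j : F))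
            = (t:F) * ∑ j ∈ range (R.card + 1), a j * (t.choose j : F) := by
          rw [Finset.mul_sum]
          exact Finset.sum_congr rfl fun j _ => by ring
        rw [e4]
        ring

/-- Binomial-basis representation with slack in the degree. -/
lemma exists_coeffs (R : Finset F) (d : ℕ) (hd : R.card ≤ d) :
    ∃ a : ℕ → F, ∀ t : ℕ, Phi a d t = ∏ c ∈ R, ((t : F) - c) := by
  obtain ⟨a, ha0, ha⟩ := exists_coeffs_aux R
  refine ⟨a, fun t => ?_⟩
  rw [← ha t]
  unfold Phi
  refine (Finset.sum_subset (Finset.range_subset_range.2 (by omega)) ?_).symm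
  intro j _ hj
  rw [Finset.mem_range, not_lt] at hj
  rw [ha0 j (by omega)]
  ring

section Fits
set_option linter.unusedSectionVars false

variable {V I J : Type} [Fintype V] [Fintype I] [Fintype J]

/-- A rank-`|I|` "fitting certificate" for the graph `G` over the field `F`. -/
def Fits (F : Type) [Field F] {V : Type} (G : SimpleGraph V) (I : Type) [Fintype I] : Prop :=
  ∃ p q : V → I → F, (∀ v, ∑ i, p v i * q v i ≠ 0) ∧
    ∀ v w, v ≠ w → ¬ G.Adj v w → ∑ i, p v i * q w i = 0

lemma Fits.prod {G : SimpleGraph V} {W : Type} [Fintype W] {H : SimpleGraph W}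
    (hG : Fits F G I) (hH : Fits F H J) :
    Fits F (FinGraph.strongProdAdj G H) (I × J) := by
  obtain ⟨p, q, hpd, hpo⟩ := hG
  obtain ⟨p', q', hpd', hpo'⟩ := hH
  refine ⟨fun v ij => p v.1 ij.1 * p' v.2 ij.2, fun v ij => q v.1 ij.1 * q' v.2 ij.2, ?_, ?_⟩
  · intro v
    rw [show (∑ ij : I × J, (p v.1 ij.1 * p' v.2 ij.2) * (q v.1 ij.1 * q' v.2 ij.2))
        = (∑ i, p v.1 i * q v.1 i) * (∑ j, p' v.2 j * q' v.2 j) by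
      rw [Finset.sum_mul_sum]; rw [Fintype.sum_prod_type]
      exact Finset.sum_congr rfl fun i _ => Finset.sum_congr rfl fun j _ => by ring]
    exact mul_ne_zero (hpd v.1) (hpd' v.2)
  · intro v w hne hnadj
    rw [show (∑ ij : I × J, (p v.1 ij.1 * p' v.2 ij.2) * (q w.1 ij.1 * q' w.2 ij.2))
        = (∑ i, p v.1 i * q w.1 i) * (∑ j, p' v.2 j * q' w.2 j) by
      rw [Finset.sum_mul_sum]; rw [Fintype.sum_prod_type]
      exact Finset.sum_congr rfl fun i _ => Finset.sum_congr rfl fun j _ => by ring]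
    -- one coordinate must be distinct and nonadjacent
    have hnadj' : ¬ (v ≠ w ∧ (G.Adj v.1 w.1 ∨ v.1 = w.1) ∧ (H.Adj v.2 w.2 ∨ v.2 = w.2)) := hnadj
    by_cases h1 : v.1 = w.1
    · have h2 : v.2 ≠ w.2 := fun h2 => hne (Prod.ext h1 h2)
      have hH : ¬ H.Adj v.2 w.2 := fun hadj => hnadj' ⟨hne, Or.inr h1, Or.inl hadj⟩
      rw [hpo' _ _ h2 hH, mul_zero]
    · by_cases hadj1 : G.Adj v.1 w.1
      · have h2 : ¬ (H.Adj v.2 w.2 ∨ v.2 = w.2) := fun h2 => hnadj' ⟨hne, Or.inl hadj1, h2⟩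
        push_neg at h2
        rw [hpo' _ _ h2.2 h2.1, mul_zero]
      · rw [hpo _ _ h1 hadj1, zero_mul]

lemma Fits.pow {G : SimpleGraph V} (hG : Fits F G I) (n : ℕ) :
    Fits F (FinGraph.strongPowAdj G n) (Fin n → I) := by
  classical
  obtain ⟨p, q, hpd, hpo⟩ := hG
  have key : ∀ x y : Fin n → V,
      (∑ f : Fin n → I, (∏ t, p (x t) (f t)) * (∏ t, q (y t) (f t)))
        = ∏ t, (∑ i, p (x t) i * q (y t) i) := by
    intro x y
    rw [Finset.prod_congr rfl (fun t _ => rfl :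
      ∀ t ∈ Finset.univ, (∑ i, p (x t) i * q (y t) i) = ∑ i ∈ Finset.univ, p (x t) i * q (y t) i)]
    rw [Finset.prod_univ_sum]
    rw [← Fintype.sum_equiv (Equiv.refl (Fin n → I)) _ _ (fun f => ?_)]
    · rfl
    · rw [← Finset.prod_mul_distrib]
      rfl
  refine ⟨fun x f => ∏ t, p (x t) (f t), fun x f => ∏ t, q (x t) (f t), ?_, ?_⟩
  · intro x
    rw [key]
    exact Finset.prod_ne_zero_iff.2 fun t _ => hpd (x t)
  · intro x y hne hnadj
    have hnadj' : ¬ (x ≠ y ∧ ∀ t, G.Adj (x t) (y t) ∨ x t = y t) := hnadj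
    have : ∃ t, ¬ (G.Adj (x t) (y t) ∨ x t = y t) := by
      by_contra hall
      push_neg at hall
      exact hnadj' ⟨hne, hall⟩
    obtain ⟨t₀, ht₀⟩ := this
    push_neg at ht₀
    rw [key]
    exact Finset.prod_eq_zero (Finset.mem_univ t₀) (hpo _ _ ht₀.2 ht₀.1)

lemma Fits.ofHom {G : SimpleGraph V} {W : Type} [Fintype W] {H : SimpleGraph W}
    (φ : Gᶜ →g Hᶜ) (hH : Fits F H I) : Fits F G I := by
  obtain ⟨p, q, hpd, hpo⟩ := hH
  refine ⟨fun v => p (φ v), fun v => q (φ v), fun v => hpd (φ v), ?_⟩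
  intro v w hne hnadj
  have hc : Gᶜ.Adj v w := ⟨hne, hnadj⟩
  have hc' : Hᶜ.Adj (φ v) (φ w) := φ.map_adj hc
  exact hpo _ _ hc'.1 hc'.2

/-- Counting bound: a pairwise non-adjacent family is no larger than any fitting
certificate's index type. -/
lemma card_le_of_fits {G : SimpleGraph V} {Γ : Type} [Fintype Γ]
    (hG : Fits F G I) (ψ : Γ → V)
    (hψ : ∀ g h, g ≠ h → ψ g ≠ ψ h ∧ ¬ G.Adj (ψ g) (ψ h)) :
    Fintype.card Γ ≤ Fintype.card I := by
  classical
  obtain ⟨p, q, hpd, hpo⟩ := hG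
  have hli : LinearIndependent F (fun g : Γ => (fun i => p (ψ g) i : I → F)) := by
    rw [Fintype.linearIndependent_iff]
    intro c hc h
    have hzero : ∀ i, (∑ g, c g * p (ψ g) i) = 0 := by
      intro i
      have := congrFun hc i
      simpa using this
    have : (∑ g, c g * (∑ i, p (ψ g) i * q (ψ h) i)) = 0 := by
      rw [Finset.sum_congr rfl (fun g _ => Finset.mul_sum _ _ _ :
        ∀ g ∈ Finset.univ, c g * (∑ i, p (ψ g) i * q (ψ h) i)
          = ∑ i, c g * (p (ψ g) i * q (ψ h) i))]
      rw [Finset.sum_comm]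
      rw [Finset.sum_congr rfl (fun i _ => ?_), Finset.sum_const_zero]
      rw [Finset.sum_congr rfl (fun g _ => (mul_assoc _ _ _).symm :
        ∀ g ∈ Finset.univ, c g * (p (ψ g) i * q (ψ h) i) = c g * p (ψ g) i * q (ψ h) i)]
      rw [← Finset.sum_mul, hzero i, zero_mul]
    rw [Finset.sum_eq_single h (fun g _ hgh => by
        rw [hpo _ _ (hψ g h hgh).1 (hψ g h hgh).2, mul_zero])
      (fun habs => absurd (Finset.mem_univ h) habs)] at this
    rcases mul_eq_zero.mp this with h0 | h0
    · exact h0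
    · exact absurd h0 (hpd (ψ h))
  have := hli.fintype_card_le_finrank
  rwa [Module.finrank_pi] at this

/-- Core counting identity: summing `b (S.card)` over subsets `S ⊆ X` with `S.card ≤ d`. -/
lemma sum_subtype_phi {m : ℕ} (X : Finset (Fin m)) (b : ℕ → F) (d : ℕ) :
    (∑ S : {S : Finset (Fin m) // S.card ≤ d}, if S.1 ⊆ X then b S.1.card else 0)
      = Phi b d X.card := by
  classical
  rw [← Finset.sum_subtype (Finset.univ.filter (fun S : Finset (Fin m) => S.card ≤ d))
    (fun S => by simp) (fun S => if S ⊆ X then b S.card else 0)]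
  rw [Finset.sum_ite, Finset.sum_const_zero, add_zero]
  have hset : (Finset.univ.filter (fun S : Finset (Fin m) => S.card ≤ d)).filter (· ⊆ X)
      = (Finset.range (d+1)).biUnion (fun j => Finset.powersetCard j X) := by
    ext S
    simp only [Finset.mem_filter, Finset.mem_univ, true_and, Finset.mem_biUnion,
      Finset.mem_range, Finset.mem_powersetCard]
    constructor
    · rintro ⟨h1, h2⟩; exact ⟨S.card, by omega, h2, rfl⟩
    · rintro ⟨j, hj, hS, rfl⟩; exact ⟨by omega, hS⟩
  rw [hset, Finset.sum_biUnion]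
  · unfold Phi
    refine Finset.sum_congr rfl fun j _ => ?_
    rw [Finset.sum_congr rfl (fun S hS => by
        rw [(Finset.mem_powersetCard.mp hS).2] :
      ∀ S ∈ Finset.powersetCard j X, b S.card = b j)]
    rw [Finset.sum_const, Finset.card_powersetCard, nsmul_eq_mul, mul_comm]
  · intro j hj j' hj' hne
    refine Finset.disjoint_left.2 fun S hS hS' => ?_
    exact hne ((Finset.mem_powersetCard.mp hS).2.symm.trans (Finset.mem_powersetCard.mp hS').2)

/-- Generic Frankl–Wilson style fitting certificate for graphs whose vertices carry a set
and a class, with adjacency determined by intersection sizes. -/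
lemma fitGeneric {m : ℕ} {M' : Type} [Fintype M'] [DecidableEq M'] {G : SimpleGraph V}
    (κ : V → Finset (Fin m)) (cls : V → M') (d : ℕ) (a : M' → ℕ → F)
    (hdiag : ∀ v, Phi (a (cls v)) d ((κ v).card) ≠ 0)
    (hoff : ∀ v w, v ≠ w → ¬ G.Adj v w → cls v = cls w →
      Phi (a (cls v)) d ((κ v ∩ κ w).card) = 0) :
    Fits F G (M' × {S : Finset (Fin m) // S.card ≤ d}) := by
  classical
  set p : V → (M' × {S : Finset (Fin m) // S.card ≤ d}) → F :=
    fun v wS => if cls v = wS.1 ∧ wS.2.1 ⊆ κ v then a (cls v) wS.2.1.card else 0 with hp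
  set q : V → (M' × {S : Finset (Fin m) // S.card ≤ d}) → F :=
    fun v wS => if cls v = wS.1 ∧ wS.2.1 ⊆ κ v then 1 else 0 with hq
  have key : ∀ v u : V, (∑ wS, p v wS * q u wS)
      = if cls v = cls u then Phi (a (cls v)) d ((κ v ∩ κ u).card) else 0 := by
    intro v u
    rw [Fintype.sum_prod_type]
    rw [Finset.sum_eq_single (cls v) (fun w _ hw => ?_) (fun habs => absurd (Finset.mem_univ _) habs)]
    · by_cases hcu : cls v = cls u
      · rw [if_pos hcu]
        rw [← sum_subtype_phi (κ v ∩ κ u) (a (cls v)) d]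
        refine Finset.sum_congr rfl fun S _ => ?_
        simp only [hp, hq, hcu]
        by_cases h1 : S.1 ⊆ κ v <;> by_cases h2 : S.1 ⊆ κ u <;>
          simp [h1, h2, Finset.subset_inter_iff, hcu.symm]
      · rw [if_neg hcu]
        refine Finset.sum_eq_zero fun S _ => ?_
        have : q u (cls v, S) = 0 := by
          simp only [hq]
          exact if_neg (fun h => hcu (h.1.symm))
        rw [this, mul_zero]
    · refine Finset.sum_eq_zero fun S _ => ?_
      simp only [hp]
      rw [if_neg (fun h => hw h.1.symm), zero_mul]
  refine ⟨p, q, ?_, ?_⟩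
  · intro v
    rw [key v v, if_pos rfl, Finset.inter_self]
    exact hdiag v
  · intro v w hne hnadj
    rw [key v w]
    by_cases hc : cls v = cls w
    · rw [if_pos hc]; exact hoff v w hne hnadj hc
    · rw [if_neg hc]

/-- Geometric sum bound. -/
lemma geom_sum_le (m d : ℕ) : ∑ j ∈ Finset.range (d+1), m^j ≤ (m+1)^d := by
  induction d with
  | zero => simp
  | succ d ih =>
      rw [Finset.sum_range_succ]
      calc ∑ j ∈ Finset.range (d+1), m^j + m^(d+1)
          ≤ (m+1)^d + m * m^d := by
            refine Nat.add_le_add ih (le_of_eq ?_)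
            rw [pow_succ, mul_comm]
        _ ≤ (m+1)^d + m * (m+1)^d :=
            Nat.add_le_add_left (Nat.mul_le_mul_left m (Nat.pow_le_pow_left (by omega) d)) _
        _ = (m+1)^(d+1) := by ring

/-- Cardinality of the index type of small subsets. -/
lemma card_small_subsets_le (m d : ℕ) :
    Fintype.card {S : Finset (Fin m) // S.card ≤ d} ≤ (m+1)^d := by
  classical
  rw [Fintype.card_subtype]
  have hset : (Finset.univ.filter (fun S : Finset (Fin m) => S.card ≤ d))
      = (Finset.range (d+1)).biUnion (fun j => Finset.powersetCard j Finset.univ) := by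
    ext S
    simp only [Finset.mem_filter, Finset.mem_univ, true_and, Finset.mem_biUnion,
      Finset.mem_range, Finset.mem_powersetCard]
    constructor
    · intro h1; exact ⟨S.card, by omega, Finset.subset_univ S, rfl⟩
    · rintro ⟨j, hj, _, rfl⟩; omega
  rw [hset]
  calc ((Finset.range (d+1)).biUnion (fun j => Finset.powersetCard j Finset.univ)).card
      ≤ ∑ j ∈ Finset.range (d+1), (Finset.powersetCard j (Finset.univ : Finset (Fin m))).card :=
        Finset.card_biUnion_le
    _ = ∑ j ∈ Finset.range (d+1), Nat.choose m j := by
        refine Finset.sum_congr rfl fun j _ => ?_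
        rw [Finset.card_powersetCard, Finset.card_univ, Fintype.card_fin]
    _ ≤ ∑ j ∈ Finset.range (d+1), m^j :=
        Finset.sum_le_sum fun j _ => Nat.choose_le_pow m j
    _ ≤ (m+1)^d := geom_sum_le m d
end Fits

section Growth

/-- Two-term binomial lower bound. -/
lemma two_term_binomial (a n : ℕ) : a^(n+1) + (n+1) * a^n ≤ (a+1)^(n+1) := by
  induction n with
  | zero =>
      simp only [pow_succ, pow_zero, one_mul, zero_add]
      omega
  | succ n ih =>
      have h1 : (a+1)^(n+1+1) = (a+1)^(n+1) * (a+1) := by ring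
      have h2 : (a^(n+1) + (n+1) * a^n) * (a+1) ≤ (a+1)^(n+1) * (a+1) :=
        Nat.mul_le_mul_right _ ih
      calc a^(n+1+1) + (n+1+1) * a^(n+1)
          ≤ (a^(n+1) + (n+1) * a^n) * (a+1) := by ring_nf; nlinarith [Nat.zero_le (a^n)]
        _ ≤ (a+1)^(n+1+1) := by rw [h1]; exact h2

lemma no_asymp_growth (Q : ℕ) (hQ : 2 ≤ Q) (f : ℕ → ℕ)
    (h : ∀ n, (Q+1)^n ≤ Q^(n + f n))
    (hf : Filter.Tendsto (fun n => (f n : ℝ) / (n : ℝ)) Filter.atTop (nhds 0)) : False := by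
  -- step 1: (Q+1)^Q ≥ 2 * Q^Q
  obtain ⟨c, rfl⟩ : ∃ c, Q = c + 1 := ⟨Q - 1, by omega⟩
  set Q := c + 1
  have hbase : 2 * Q^Q ≤ (Q+1)^Q := by
    have h := two_term_binomial Q c
    have e : 2 * Q^Q = Q^(c+1) + (c+1) * Q^c := by
      show 2 * Q^Q = Q^(c+1) + Q * Q^c
      ring
    rw [e]
    exact h
  -- step 2: key numeric inequality for n = Q * u
  have key : ∀ u : ℕ, Q * u ≤ Q^2 * f (Q * u) := by
    intro u
    have h1 : 2^u * Q^(Q*u) ≤ (Q+1)^(Q*u) := by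
      calc 2^u * Q^(Q*u) = (2 * Q^Q)^u := by
            rw [mul_pow, ← pow_mul, mul_comm Q u]
        _ ≤ ((Q+1)^Q)^u := Nat.pow_le_pow_left hbase u
        _ = (Q+1)^(Q*u) := by rw [← pow_mul, mul_comm]
    have h2 : 2^u * Q^(Q*u) ≤ Q^(Q*u) * Q^(f (Q*u)) := by
      calc 2^u * Q^(Q*u) ≤ (Q+1)^(Q*u) := h1
        _ ≤ Q^(Q*u + f (Q*u)) := h (Q*u)
        _ = Q^(Q*u) * Q^(f (Q*u)) := pow_add Q _ _
    have h3 : 2^u ≤ Q^(f (Q*u)) := by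
      have hpos : 0 < Q^(Q*u) := Nat.pow_pos (by omega)
      have := h2
      rw [mul_comm (2^u) _] at this
      exact Nat.le_of_mul_le_mul_left this hpos
    have h4 : 2^u ≤ 2^(Q * f (Q*u)) := by
      calc 2^u ≤ Q^(f (Q*u)) := h3
        _ ≤ (2^Q)^(f (Q*u)) := Nat.pow_le_pow_left (le_of_lt (Nat.lt_two_pow_self)) _
        _ = 2^(Q * f (Q*u)) := by rw [← pow_mul]
    have h5 : u ≤ Q * f (Q*u) := (Nat.pow_le_pow_iff_right (le_refl 2)).mp h4
    calc Q * u ≤ Q * (Q * f (Q*u)) := Nat.mul_le_mul_left Q h5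
      _ = Q^2 * f (Q*u) := by ring
  -- step 3: contradiction with f = o(n)
  have hQR : (0:ℝ) < 1 / ((Q:ℝ)^2 + 1) := by positivity
  have hev := hf.eventually_lt_const hQR
  rw [Filter.eventually_atTop] at hev
  obtain ⟨n₀, hn₀⟩ := hev
  set u := n₀ + 1
  set n := Q * u with hn
  have hge : n₀ ≤ n := by
    calc n₀ ≤ u := by omega
      _ ≤ Q * u := Nat.le_mul_of_pos_left u (by omega)
  have hlt := hn₀ n hge
  have hnpos : 0 < n := by positivity
  have hnR : (0:ℝ) < (n:ℝ) := by exact_mod_cast hnpos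
  rw [div_lt_iff₀ hnR] at hlt
  have hlt2 : (f n : ℝ) * ((Q:ℝ)^2 + 1) < n := by
    rw [div_mul_eq_mul_div, lt_div_iff₀ (by positivity)] at hlt
    linarith
  have hltn : f n * (Q^2 + 1) < n := by exact_mod_cast hlt2
  have hk := key u
  rw [← hn] at hk
  have e : f n * (Q^2 + 1) = Q^2 * f n + f n := by ring
  omega

end Growth

section Main
set_option linter.unusedSectionVars false

open FinGraph

/-- An increasing sequence of odd primes. -/
noncomputable def nthP : ℕ → ℕ
  | 0 => 3
  | j+1 => (Nat.exists_infinite_primes (nthP j + 1)).choose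

lemma nthP_spec (j : ℕ) : Nat.Prime (nthP j) ∧ 3 ≤ nthP j := by
  induction j with
  | zero => exact ⟨by norm_num [nthP], le_refl 3⟩
  | succ j ih =>
      obtain ⟨h1, h2⟩ := (Nat.exists_infinite_primes (nthP j + 1)).choose_spec
      exact ⟨h2, by
        have : nthP (j+1) = (Nat.exists_infinite_primes (nthP j + 1)).choose := rfl
        omega⟩

lemma nthP_strictMono : StrictMono nthP := by
  have h : ∀ j, nthP j < nthP (j+1) := by
    intro j
    obtain ⟨h1, h2⟩ := (Nat.exists_infinite_primes (nthP j + 1)).choose_spec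
    have : nthP (j+1) = (Nat.exists_infinite_primes (nthP j + 1)).choose := rfl
    omega
  exact strictMono_nat_of_lt_succ h

variable (M : Type) [Fintype M] [Preorder M]

/-- Distinct odd primes attached to the elements of `M`. -/
noncomputable def pr (z : M) : ℕ := nthP ((Fintype.equivFin M) z)

lemma pr_prime (z : M) : Nat.Prime (pr M z) := (nthP_spec _).1

lemma pr_ge_three (z : M) : 3 ≤ pr M z := (nthP_spec _).2

lemma pr_injective : Function.Injective (pr M) := fun z w h =>
  (Fintype.equivFin M).injective (Fin.ext (nthP_strictMono.injective h))

/-- Sizes of the ground sets of the gadget graphs. -/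
noncomputable def szM (z : M) : ℕ := 2 * pr M z

noncomputable def DD : ℕ := ∏ z : M, szM M z

noncomputable def PB : ℕ := ∏ z : M, pr M z

noncomputable def eeM : ℕ := PB M + 1

noncomputable def LL : ℕ := Fintype.card M * (2 * DD M)^(eeM M) + 1

noncomputable def mm : ℕ := LL M * DD M

lemma LL_pos : 1 ≤ LL M := by unfold LL; omega

lemma sz_le_DD (z : M) : szM M z ≤ DD M := by
  refine Finset.single_le_prod' (fun w _ => ?_) (Finset.mem_univ z)
  have := pr_ge_three M w
  unfold szM
  omega

lemma DD_pos : 1 ≤ DD M := Finset.one_le_prod' fun z _ => by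
  have := pr_ge_three M z
  unfold szM
  omega

lemma pr_le_PB (z : M) : pr M z ≤ PB M := by
  refine Finset.single_le_prod' (fun w _ => ?_) (Finset.mem_univ z)
  have := pr_ge_three M w
  omega

lemma mm_pos : 1 ≤ mm M := by
  have h1 := LL_pos M
  have h2 := DD_pos M
  unfold mm
  nlinarith

lemma code_lt (z : M) (b : Fin (szM M z)) (c : Fin (LL M)) :
    b.1 * LL M + c.1 < mm M := by
  have hb := b.2
  have hc := c.2
  have h1 : b.1 * LL M + c.1 < (b.1 + 1) * LL M := by nlinarith
  have h2 : (b.1 + 1) * LL M ≤ szM M z * LL M :=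
    Nat.mul_le_mul_right _ (by omega)
  have h3 : szM M z * LL M ≤ DD M * LL M :=
    Nat.mul_le_mul_right _ (sz_le_DD M z)
  have : mm M = DD M * LL M := by unfold mm; ring
  omega

lemma code_inj {L b b' c c' : ℕ} (hL : 0 < L) (hc : c < L) (hc' : c' < L)
    (h : b * L + c = b' * L + c') : b = b' ∧ c = c' := by
  have e1 : (b * L + c) / L = b := by
    rw [mul_comm, Nat.mul_add_div hL, Nat.div_eq_of_lt hc, add_zero]
  have e2 : (b' * L + c') / L = b' := by
    rw [mul_comm, Nat.mul_add_div hL, Nat.div_eq_of_lt hc', add_zero]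
  have e3 : (b * L + c) % L = c := by
    rw [mul_comm, Nat.mul_add_mod, Nat.mod_eq_of_lt hc]
  have e4 : (b' * L + c') % L = c' := by
    rw [mul_comm, Nat.mul_add_mod, Nat.mod_eq_of_lt hc']
  constructor
  · rw [← e1, ← e2, h]
  · rw [← e3, ← e4, h]

/-- Block encoding of tuples as subsets of `Fin (mm M)`. -/
noncomputable def enc (z : M) (g : Fin (szM M z) → Fin (LL M)) : Finset (Fin (mm M)) :=
  Finset.univ.image (fun b : Fin (szM M z) => (⟨b.1 * LL M + (g b).1, code_lt M z b (g b)⟩ : Fin (mm M)))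

lemma enc_card (z : M) (g : Fin (szM M z) → Fin (LL M)) : (enc M z g).card = szM M z := by
  rw [enc, Finset.card_image_of_injective _ ?_, Finset.card_univ, Fintype.card_fin]
  intro b b' h
  have h' : b.1 * LL M + (g b).1 = b'.1 * LL M + (g b').1 := congrArg Fin.val h
  exact Fin.ext (code_inj (LL_pos M) (g b).2 (g b').2 h').1

lemma enc_injective (z : M) : Function.Injective (enc M z) := by
  intro g g' h
  funext b
  have hmem : (⟨b.1 * LL M + (g b).1, code_lt M z b (g b)⟩ : Fin (mm M)) ∈ enc M z g' := by
    rw [← h, enc]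
    exact Finset.mem_image_of_mem _ (Finset.mem_univ b)
  rw [enc, Finset.mem_image] at hmem
  obtain ⟨b', _, hb'⟩ := hmem
  have h' : b'.1 * LL M + (g' b').1 = b.1 * LL M + (g b).1 := congrArg Fin.val hb'
  obtain ⟨h1, h2⟩ := code_inj (LL_pos M) (g' b').2 (g b).2 h'
  have : b' = b := Fin.ext h1
  subst this
  exact Fin.ext h2.symm

/-- Vertex type of the union gadget graph attached to `S : Finset M`. -/
def VV (S : Finset M) : Type :=
  {q : M × Finset (Fin (mm M)) // q.1 ∈ S ∧ q.2.card = szM M q.1}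

noncomputable instance fintypeVV (S : Finset M) : Fintype (VV M S) := by
  classical
  unfold VV
  infer_instance

/-- Adjacency of the union gadget graph. -/
def adjVV (S : Finset M) : SimpleGraph (VV M S) where
  Adj a b := a ≠ b ∧ a.1.1 = b.1.1 ∧ ¬ (pr M a.1.1 ∣ (a.1.2 ∩ b.1.2).card)
  symm := by
    constructor
    rintro a b ⟨h1, h2, h3⟩
    refine ⟨h1.symm, h2.symm, ?_⟩
    rwa [Finset.inter_comm, ← h2]
  loopless := ⟨fun a h => h.1 rfl⟩

noncomputable def GG (S : Finset M) : FinGraph := mk' (VV M S) (adjVV M S)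

/-- Vertex type of the complement gadget graph at `z`. -/
def VB (z : M) : Type := {A : Finset (Fin (mm M)) // A.card = szM M z}

noncomputable instance fintypeVB (z : M) : Fintype (VB M z) := by
  classical
  unfold VB
  infer_instance

def adjVB (z : M) : SimpleGraph (VB M z) where
  Adj a b := a ≠ b ∧ (pr M z ∣ (a.1 ∩ b.1).card)
  symm := by
    constructor
    rintro a b ⟨h1, h2⟩
    exact ⟨h1.symm, by rwa [Finset.inter_comm]⟩
  loopless := ⟨fun a h => h.1 rfl⟩

noncomputable def BB (z : M) : FinGraph := mk' (VB M z) (adjVB M z)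

/-- The down-set of `x` in `M`. -/
noncomputable def dwn (x : M) : Finset M :=
  @Finset.filter M (fun z => z ≤ x) (fun z => Classical.propDecidable _) Finset.univ

lemma mem_dwn {x z : M} : z ∈ dwn M x ↔ z ≤ x := by
  unfold dwn
  rw [@Finset.mem_filter M (fun z => z ≤ x) (fun z => Classical.propDecidable _) Finset.univ z]
  simp

lemma dwn_mono {x y : M} (h : x ≤ y) : dwn M x ⊆ dwn M y := by
  intro z hz
  rw [mem_dwn] at hz ⊢
  exact hz.trans h

section Positive

variable {M}

/-- Inclusion of gadget graphs along `S ⊆ T`, as a map of vertices. -/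
def inclVV {S T : Finset M} (h : S ⊆ T) (v : VV M S) : VV M T :=
  ⟨v.1, h v.2.1, v.2.2⟩

lemma inclVV_injective {S T : Finset M} (h : S ⊆ T) : Function.Injective (inclVV h) := by
  intro v w hvw
  have : (inclVV h v).1 = (inclVV h w).1 := congrArg Subtype.val hvw
  exact Subtype.ext this

lemma adjVV_reflect {S T : Finset M} (h : S ⊆ T) {a b : VV M S}
    (hadj : (adjVV M T).Adj (inclVV h a) (inclVV h b)) : (adjVV M S).Adj a b := by
  obtain ⟨h1, h2, h3⟩ := hadj
  exact ⟨fun he => h1 (congrArg _ he), h2, h3⟩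

lemma cohom_spow_mono {S T : Finset M} (h : S ⊆ T) (n : ℕ) :
    cohomLE ((GG M S).spow n) ((GG M T).spow n) := by
  refine ⟨⟨fun v => fun t => inclVV h (v t), ?_⟩⟩
  intro u v huv
  rw [SimpleGraph.compl_adj] at huv
  refine (SimpleGraph.compl_adj _ _ _).2 ?_
  obtain ⟨hne, hnadj⟩ := huv
  constructor
  · intro he
    apply hne
    funext t
    exact inclVV_injective h (congrFun he t)
  · intro hadj
    obtain ⟨hne2, hall⟩ := hadj
    refine hnadj ⟨hne, fun t => ?_⟩
    rcases hall t with hA | hE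
    · exact Or.inl (adjVV_reflect h hA)
    · exact Or.inr (inclVV_injective h hE)

lemma asymp_of_le {x y : M} (hxy : x ≤ y) :
    asympCohomLE (GG M (dwn M x)) (GG M (dwn M y)) := by
  refine ⟨fun _ => 0, ?_, fun n => cohom_spow_mono (dwn_mono M hxy) n⟩
  have he : (fun n : ℕ => ((0:ℕ) : ℝ) / (n : ℝ)) = fun _ => (0:ℝ) := by
    funext n
    simp
  rw [he]
  exact tendsto_const_nhds

end Positive

section Negative

variable {M}

lemma certB (x : M) [hq : Fact (Nat.Prime (pr M x))] :
    Fits (ZMod (pr M x)) (BB M x).G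
      (Unit × {S : Finset (Fin (mm M)) // S.card ≤ pr M x - 1}) := by
  classical
  haveI : NeZero (pr M x) := ⟨hq.out.ne_zero⟩
  set F := ZMod (pr M x)
  set Ra : Finset F := Finset.univ \ {0} with hRa
  have hcard : Ra.card = pr M x - 1 := by
    rw [hRa, Finset.card_sdiff_of_subset (Finset.subset_univ _), Finset.card_singleton,
      Finset.card_univ, ZMod.card]
  obtain ⟨a, ha⟩ := exists_coeffs Ra (pr M x - 1) (le_of_eq hcard)
  refine fitGeneric (G := (BB M x).G) (fun v => v.1) (fun _ => ()) (pr M x - 1)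
    (fun _ => a) ?_ ?_
  · intro v
    rw [v.2, ha]
    have h0 : ((szM M x : ℕ) : F) = 0 := by
      rw [ZMod.natCast_eq_zero_iff]
      exact dvd_mul_left (pr M x) 2
    rw [h0]
    rw [Finset.prod_ne_zero_iff]
    intro c hc
    rw [hRa, Finset.mem_sdiff, Finset.mem_singleton] at hc
    rw [zero_sub]
    exact neg_ne_zero.mpr hc.2
  · intro v w hne hnadj _
    have hnd : ¬ (pr M x ∣ (v.1 ∩ w.1).card) := fun hd => hnadj ⟨hne, hd⟩
    rw [ha]
    refine Finset.prod_eq_zero (i := (((v.1 ∩ w.1).card : ℕ) : F)) ?_ (sub_self _)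
    rw [hRa, Finset.mem_sdiff, Finset.mem_singleton]
    refine ⟨Finset.mem_univ _, ?_⟩
    intro h0
    rw [ZMod.natCast_eq_zero_iff] at h0
    exact hnd h0

lemma certU (x y : M) [hq : Fact (Nat.Prime (pr M x))] (hxy : ¬ x ≤ y) :
    Fits (ZMod (pr M x)) (GG M (dwn M y)).G
      (M × {S : Finset (Fin (mm M)) // S.card ≤ 2}) := by
  classical
  haveI : NeZero (pr M x) := ⟨hq.out.ne_zero⟩
  set F := ZMod (pr M x)
  set Rb : M → Finset F := fun z => insert 0 {((pr M z : ℕ) : F)} with hRb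
  have hcard : ∀ z, (Rb z).card ≤ 2 := fun z =>
    le_trans (Finset.card_insert_le _ _) (by rw [Finset.card_singleton])
  have hex : ∀ z : M, ∃ a : ℕ → F, ∀ t : ℕ,
      Phi a 2 t = ∏ c ∈ Rb z, ((t : F) - c) := fun z => exists_coeffs _ 2 (hcard z)
  choose a ha using hex
  have hq2 : ¬ (pr M x ∣ 2) := fun hd => by
    have h3 := pr_ge_three M x
    have := Nat.le_of_dvd (by norm_num) hd
    omega
  have hqz : ∀ z : M, z ≠ x → ¬ (pr M x ∣ pr M z) := by
    intro z hzx hd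
    rw [Nat.prime_dvd_prime_iff_eq hq.out (pr_prime M z)] at hd
    exact hzx (pr_injective M hd).symm
  have hzbar : ∀ z : M, z ≠ x → ((pr M z : ℕ) : F) ≠ 0 := by
    intro z hzx h0
    rw [ZMod.natCast_eq_zero_iff] at h0
    exact hqz z hzx h0
  refine fitGeneric (G := (GG M (dwn M y)).G) (fun v => v.1.2) (fun v => v.1.1) 2 a ?_ ?_
  · intro v
    have hzy : v.1.1 ≤ y := (mem_dwn M).mp v.2.1
    have hzx : v.1.1 ≠ x := fun h => hxy (h ▸ hzy)
    rw [v.2.2, ha]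
    rw [Finset.prod_ne_zero_iff]
    intro c hc
    rw [hRb] at hc
    rcases Finset.mem_insert.mp hc with h0 | hpz
    · subst h0
      rw [sub_zero, Ne, ZMod.natCast_eq_zero_iff]
      intro hd
      unfold szM at hd
      rcases (Nat.Prime.dvd_mul hq.out).mp hd with h | h
      · exact hq2 h
      · exact hqz _ hzx h
    · rw [Finset.mem_singleton] at hpz
      subst hpz
      have he : ((szM M v.1.1 : ℕ) : F) - ((pr M v.1.1 : ℕ) : F) = ((pr M v.1.1 : ℕ) : F) := by
        rw [show szM M v.1.1 = pr M v.1.1 + pr M v.1.1 from two_mul _, Nat.cast_add,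
          add_sub_cancel_right]
      rw [he]
      exact hzbar _ hzx
  · intro v w hne hnadj hcls0
    have hcls : v.1.1 = w.1.1 := hcls0
    set t := (v.1.2 ∩ w.1.2).card with ht
    have hAB : v.1.2 ≠ w.1.2 := by
      intro hab
      exact hne (Subtype.ext (Prod.ext hcls hab))
    have hdvd : pr M v.1.1 ∣ t := by
      by_contra hnd
      exact hnadj ⟨hne, hcls, hnd⟩
    have hcards : w.1.2.card = szM M v.1.1 := by
      rw [w.2.2, ← hcls]

    have htlt : t < szM M v.1.1 := by
      have hsub : v.1.2 ∩ w.1.2 ⊆ v.1.2 := Finset.inter_subset_left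
      rcases lt_or_eq_of_le (Finset.card_le_card hsub) with h | h
      · rw [← v.2.2]; exact h
      · exfalso
        have h1 : v.1.2 ∩ w.1.2 = v.1.2 :=
          Finset.eq_of_subset_of_card_le hsub (le_of_eq h.symm)
        have h2 : v.1.2 ⊆ w.1.2 := Finset.inter_eq_left.mp h1
        exact hAB (Finset.eq_of_subset_of_card_le h2 (by rw [v.2.2, hcards]))
    obtain ⟨c, hc⟩ := hdvd
    have hp3 := pr_ge_three M v.1.1
    have hc2 : c < 2 := by
      by_contra hcge
      push_neg at hcge
      have : pr M v.1.1 * 2 ≤ pr M v.1.1 * c := Nat.mul_le_mul_left _ hcge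
      unfold szM at htlt
      omega
    rw [ha]
    refine Finset.prod_eq_zero (i := ((t : ℕ) : F)) ?_ (sub_self _)
    rw [hRb]
    interval_cases c
    · rw [Finset.mem_insert]
      left
      rw [hc, Nat.mul_zero, Nat.cast_zero]
    · rw [Finset.mem_insert, Finset.mem_singleton]
      right
      rw [hc, Nat.mul_one]

lemma key_lt (x : M) :
    Fintype.card M * (mm M + 1)^2 * ((mm M + 1)^(pr M x - 1)) < LL M ^ szM M x := by
  have hq3 := pr_ge_three M x
  have hL1 := LL_pos M
  have hD1 := DD_pos M
  set q := pr M x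
  set k := Fintype.card M
  have e1 : (mm M + 1)^2 * (mm M + 1)^(q - 1) = (mm M + 1)^(q + 1) := by
    rw [← pow_add]
    congr 1
    omega
  have hmm : mm M = LL M * DD M := rfl
  have h2 : mm M + 1 ≤ 2 * DD M * LL M := by nlinarith
  have h3 : (mm M + 1)^(q+1) ≤ (2 * DD M)^(q+1) * LL M^(q+1) := by
    rw [← mul_pow]
    exact Nat.pow_le_pow_left h2 _
  have h4 : k * (2 * DD M)^(q+1) < LL M := by
    have h5 : k * (2 * DD M)^(q+1) ≤ k * (2 * DD M)^(eeM M) := by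
      refine Nat.mul_le_mul_left k (Nat.pow_le_pow_right (by omega) ?_)
      have := pr_le_PB M x
      unfold eeM
      omega
    have h6 : LL M = k * (2 * DD M)^(eeM M) + 1 := rfl
    omega
  calc k * (mm M + 1)^2 * ((mm M + 1)^(q - 1))
      = k * ((mm M + 1)^(q+1)) := by rw [mul_assoc, e1]
    _ ≤ k * ((2 * DD M)^(q+1) * LL M^(q+1)) := Nat.mul_le_mul_left k h3
    _ = (k * (2 * DD M)^(q+1)) * LL M^(q+1) := by ring
    _ < LL M * LL M^(q+1) :=
        Nat.mul_lt_mul_of_lt_of_le h4 (le_refl _) (Nat.pow_pos (by omega))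
    _ = LL M^(q+2) := by rw [← pow_succ']
    _ ≤ LL M^(2*q) := Nat.pow_le_pow_right (by omega) (by omega)
    _ = LL M ^ szM M x := rfl

lemma not_asymp (x y : M) (hxy : ¬ x ≤ y) :
    ¬ asympCohomLE (GG M (dwn M x)) (GG M (dwn M y)) := by
  classical
  haveI : Fact (Nat.Prime (pr M x)) := ⟨pr_prime M x⟩
  rintro ⟨f, hf, hcoh⟩
  set K1 := Fintype.card M * (mm M + 1)^2 with hK1
  set K2 := (mm M + 1)^(pr M x - 1) with hK2
  set N := LL M ^ szM M x with hN
  have hmain : ∀ n, N^n ≤ K1^(n + f n) * K2^n := by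
    intro n
    obtain ⟨φ⟩ := hcoh n
    set vx : (Fin (szM M x) → Fin (LL M)) → VV M (dwn M x) :=
      fun c => ⟨(x, enc M x c), ⟨(mem_dwn M).mpr le_rfl, enc_card M x c⟩⟩ with hvx
    set vb : (Fin (szM M x) → Fin (LL M)) → VB M x :=
      fun c => ⟨enc M x c, enc_card M x c⟩ with hvb
    set ψ : (Fin n → (Fin (szM M x) → Fin (LL M))) →
        (Fin (n + f n) → VV M (dwn M y)) × (Fin n → VB M x) :=
      fun g => (φ (fun t => vx (g t)), fun t => vb (g t)) with hψdef
    have hfit : Fits (ZMod (pr M x))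
        (strongProdAdj (strongPowAdj (GG M (dwn M y)).G (n + f n))
          (strongPowAdj (BB M x).G n))
        ((Fin (n + f n) → M × {S : Finset (Fin (mm M)) // S.card ≤ 2}) ×
         (Fin n → Unit × {S : Finset (Fin (mm M)) // S.card ≤ pr M x - 1})) :=
      Fits.prod ((certU x y hxy).pow (n + f n)) ((certB x).pow n)
    have hψ : ∀ g h, g ≠ h → ψ g ≠ ψ h ∧
        ¬ (strongProdAdj (strongPowAdj (GG M (dwn M y)).G (n + f n))
            (strongPowAdj (BB M x).G n)).Adj (ψ g) (ψ h) := by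
      intro g h hgh
      obtain ⟨t₀, ht₀⟩ := Function.ne_iff.mp hgh
      have hABne : enc M x (g t₀) ≠ enc M x (h t₀) :=
        fun he => ht₀ (enc_injective M x he)
      by_cases hdvd : pr M x ∣ ((enc M x (g t₀) ∩ enc M x (h t₀)).card)
      · -- the left (union graph) coordinate certifies non-adjacency
        have hcadj : ((GG M (dwn M x)).spow n).Gᶜ.Adj
            (fun t => vx (g t)) (fun t => vx (h t)) := by
          refine (SimpleGraph.compl_adj _ _ _).2 ?_
          constructor
          · intro he
            exact hABne (congrArg (fun w : Fin n → VV M (dwn M x) => (w t₀).1.2) he)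
          · rintro ⟨hne2, hall⟩
            rcases hall t₀ with hA | hE
            · exact hA.2.2 hdvd
            · exact hABne (congrArg (fun p : VV M (dwn M x) => p.1.2) hE)
        have hφ := φ.map_adj hcadj
        rw [SimpleGraph.compl_adj] at hφ
        constructor
        · intro he
          exact hφ.1 (congrArg Prod.fst he)
        · rintro ⟨hne2, hOr1, hOr2⟩
          rcases hOr1 with hA | hE
          · exact hφ.2 hA
          · exact hφ.1 hE
      · -- the right (complement gadget) coordinate certifies non-adjacency
        constructor
        · intro he
          have h2 := congrArg (fun p : _ × (Fin n → VB M x) => (p.2 t₀).1) he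
          exact hABne h2
        · rintro ⟨hne2, hOr1, hOr2⟩
          rcases hOr2 with hA | hE
          · rcases hA.2 t₀ with hAdj | hEq
            · exact hdvd hAdj.2
            · exact hABne (congrArg Subtype.val hEq)
          · exact hABne (congrArg Subtype.val (congrFun hE t₀))
    have hcard := card_le_of_fits hfit ψ hψ
    have hΓ : Fintype.card (Fin n → (Fin (szM M x) → Fin (LL M))) = N^n := by
      rw [Fintype.card_fun, Fintype.card_fun]
      simp [hN]
    have hI : Fintype.card
        ((Fin (n + f n) → M × {S : Finset (Fin (mm M)) // S.card ≤ 2}) ×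
         (Fin n → Unit × {S : Finset (Fin (mm M)) // S.card ≤ pr M x - 1}))
        ≤ K1^(n + f n) * K2^n := by
      rw [Fintype.card_prod, Fintype.card_fun, Fintype.card_fun, Fintype.card_prod,
        Fintype.card_prod, Fintype.card_unit, Fintype.card_fin, Fintype.card_fin, one_mul]
      refine Nat.mul_le_mul (Nat.pow_le_pow_left ?_ _) (Nat.pow_le_pow_left ?_ _)
      · exact Nat.mul_le_mul_left _ (card_small_subsets_le (mm M) 2)
      · exact card_small_subsets_le (mm M) (pr M x - 1)
    rw [hΓ] at hcard
    exact le_trans hcard hI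
  -- numeric contradiction
  set Q := K1 * K2 with hQ
  have hQ2 : 2 ≤ Q := by
    have hk : 1 ≤ Fintype.card M := Fintype.card_pos_iff.mpr ⟨x⟩
    have hm := mm_pos M
    have h1 : 4 ≤ K1 := by
      rw [hK1]
      have h4 : (2:ℕ)^2 ≤ (mm M + 1)^2 := Nat.pow_le_pow_left (by omega) 2
      calc 4 = 1 * 4 := by norm_num
        _ ≤ Fintype.card M * (mm M + 1)^2 := Nat.mul_le_mul hk (by omega)
    have h2 : 1 ≤ K2 := Nat.pow_pos (by omega)
    calc 2 ≤ 4 * 1 := by norm_num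
      _ ≤ K1 * K2 := Nat.mul_le_mul h1 h2
  have hNQ : Q + 1 ≤ N := by
    have := key_lt (M := M) x
    rw [← hK1, ← hK2, ← hN] at this
    rw [hQ]
    omega
  refine no_asymp_growth Q hQ2 f (fun n => ?_) hf
  have h1 : (Q+1)^n ≤ N^n := Nat.pow_le_pow_left hNQ n
  have h2 : K2^n ≤ K2^(n + f n) :=
    Nat.pow_le_pow_right (Nat.pow_pos (by
      have hm := mm_pos M
      omega)) (by omega)
  calc (Q+1)^n ≤ N^n := h1
    _ ≤ K1^(n + f n) * K2^n := hmain n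
    _ ≤ K1^(n + f n) * K2^(n + f n) := Nat.mul_le_mul_left _ h2
    _ = Q^(n + f n) := by rw [hQ, mul_pow K1 K2]

end Negative

end Main

end AsympAux

/-- Every finite preorder order-embeds into the asymptotic cohomomorphism preorder. -/
theorem finite_preorder_embeds_asympCohom (M : Type) [Fintype M] [Preorder M] :
    ∃ F : M → FinGraph, ∀ x y : M, x ≤ y ↔ asympCohomLE (F x) (F y) := by
  refine ⟨fun x => AsympAux.GG M (AsympAux.dwn M x),
    fun x y => ⟨fun h => AsympAux.asymp_of_le h, fun h => ?_⟩⟩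
  by_contra hxy
  exact AsympAux.not_asymp x y hxy h
end

section
/- Let 1 ≤ s < t be real numbers. One can assign to each finite binary string w ∈ W = {0,1}* a pair of rational numbers (a_w, b_w) with a_w > 2 and b_w > 2, and a real number r_w ∈ (s, t), such that: (i) for every v, w ∈ W, if v ≤_W w and v ≠ w, then a_v < a_w and b_v < b_w; and (ii) for every v, w ∈ W, if v ≰_W w, then a_v·r_v + b_v > a_w·r_v + b_w. -/
open Filter

open FinGraph

structure LSt where
  a : ℚ
  b : ℚ
  l : ℚ
  u : ℚ
  e : ℚ

/-- One refinement step. -/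
def lstep (T : ℚ) (c : Bool) (σ : LSt) : LSt :=
  if c then
    { a := σ.a - σ.e / (4*(T+1)) / 2
      b := σ.b - (σ.e / (4*(T+1)) + σ.e / (4*(T+1)) * ((σ.l + σ.u)/2) / 2)
      l := σ.u - (σ.u - σ.l)/4
      u := σ.u
      e := σ.e / (4*(T+1)) * ((σ.u - σ.l)/4) / 4 }
  else
    { a := σ.a - σ.e / (4*(T+1))
      b := σ.b - σ.e / (4*(T+1))
      l := σ.l
      u := σ.l + (σ.u - σ.l)/4
      e := σ.e / (4*(T+1)) * ((σ.u - σ.l)/4) / 4 }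

def lstw (T : ℚ) (σ : LSt) (v : List Bool) : LSt := v.foldl (fun σ c => lstep T c σ) σ

def LGood (S T : ℚ) (σ : LSt) : Prop := S ≤ σ.l ∧ σ.l < σ.u ∧ σ.u ≤ T ∧ 0 < σ.e

lemma lstw_cons (T : ℚ) (σ : LSt) (c : Bool) (v : List Bool) :
    lstw T σ (c :: v) = lstw T (lstep T c σ) v := rfl

lemma lstw_append (T : ℚ) (σ : LSt) (v w : List Bool) :
    lstw T σ (v ++ w) = lstw T (lstw T σ v) w := List.foldl_append ..

lemma lstep_facts (S T : ℚ) (hS : 1 ≤ S) (hT : S ≤ T) (c : Bool) (σ : LSt) (hσ : LGood S T σ) :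
    LGood S T (lstep T c σ) ∧
    (lstep T c σ).a < σ.a ∧ (lstep T c σ).b < σ.b ∧
    σ.l ≤ (lstep T c σ).l ∧ (lstep T c σ).u ≤ σ.u ∧
    (∀ x, 0 ≤ x → x ≤ T →
      (σ.a - (lstep T c σ).a) * x + (σ.b - (lstep T c σ).b) + (lstep T c σ).e ≤ σ.e) := by
  obtain ⟨h1, h2, h3, h4⟩ := hσ
  have hT0 : (1:ℚ) ≤ T := le_trans hS hT
  have hT1 : (0:ℚ) < 4*(T+1) := by linarith
  have hδ : 0 < σ.e / (4*(T+1)) := div_pos h4 hT1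
  have hδk : σ.e / (4*(T+1)) * (4*(T+1)) = σ.e := div_mul_cancel₀ _ (ne_of_gt hT1)
  set δ := σ.e / (4*(T+1)) with hδdef
  have hul : σ.u - σ.l ≤ T := by linarith
  have hm : 0 < (σ.l + σ.u)/2 := by linarith
  have hmT : (σ.l + σ.u)/2 ≤ T := by linarith
  have hδul : δ * (σ.u - σ.l) ≤ δ * T := mul_le_mul_of_nonneg_left hul hδ.le
  have hδm : δ * ((σ.l + σ.u)/2) ≤ δ * T := mul_le_mul_of_nonneg_left hmT hδ.le
  have hδm0 : 0 < δ * ((σ.l + σ.u)/2) := mul_pos hδ hm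
  have hδT : 0 < δ * T := mul_pos hδ (by linarith)
  cases c <;>
    simp only [lstep, if_true, if_false, Bool.false_eq_true, ← hδdef] <;>
    refine ⟨⟨by linarith, by linarith, by linarith, by nlinarith⟩,
      by nlinarith, by nlinarith, by linarith, by linarith, fun x hx0 hxT => ?_⟩ <;>
    nlinarith [mul_le_mul_of_nonneg_left hxT hδ.le, hδul, hδm, hδT, hδk,
      mul_nonneg hδ.le hx0]

lemma lstep_sep (S T : ℚ) (hS : 1 ≤ S) (hT : S ≤ T) (c c' : Bool) (hcc : c ≠ c')
    (σ : LSt) (hσ : LGood S T σ) :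
    ∀ x, (lstep T c σ).l ≤ x → x ≤ (lstep T c σ).u →
      (lstep T c' σ).a * x + (lstep T c' σ).b + 2 * (lstep T c σ).e ≤
        (lstep T c σ).a * x + (lstep T c σ).b := by
  obtain ⟨h1, h2, h3, h4⟩ := hσ
  have hT1 : (0:ℚ) < 4*(T+1) := by linarith
  have hδ : 0 < σ.e / (4*(T+1)) := div_pos h4 hT1
  set δ := σ.e / (4*(T+1)) with hδdef
  intro x hx1 hx2
  cases c <;> cases c' <;>
    first
    | exact absurd rfl hcc
    | (simp only [lstep, if_true, if_false, Bool.false_eq_true, ← hδdef] at hx1 hx2 ⊢)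
  · -- c = true (right), c' = false: x ≥ u - (u-l)/4, x - m ≥ (u-l)/4
    nlinarith [mul_le_mul_of_nonneg_left (show (σ.u - σ.l)/4 ≤ (σ.l + σ.u)/2 - x by linarith) hδ.le]
  · -- c = false (left), c' = true: on left interval  x ≤ l + (u-l)/4, m - x ≥ (u-l)/4
    nlinarith [mul_le_mul_of_nonneg_left (show (σ.u - σ.l)/4 ≤ x - (σ.l + σ.u)/2 by linarith) hδ.le]

lemma lstw_facts (S T : ℚ) (hS : 1 ≤ S) (hT : S ≤ T) :
    ∀ (v : List Bool) (σ : LSt), LGood S T σ →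
      LGood S T (lstw T σ v) ∧ (lstw T σ v).a ≤ σ.a ∧ (lstw T σ v).b ≤ σ.b ∧
      σ.l ≤ (lstw T σ v).l ∧ (lstw T σ v).u ≤ σ.u ∧
      (v ≠ [] → (lstw T σ v).a < σ.a ∧ (lstw T σ v).b < σ.b) ∧
      (∀ x, (lstw T σ v).l ≤ x → x ≤ (lstw T σ v).u →
        (σ.a - (lstw T σ v).a) * x + (σ.b - (lstw T σ v).b) + (lstw T σ v).e ≤ σ.e)
  | [], σ, hσ => by
      refine ⟨hσ, le_refl _, le_refl _, le_refl _, le_refl _, by simp, fun x _ _ => by simp [lstw]⟩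
  | c :: v, σ, hσ => by
      have hstep := lstep_facts S T hS hT c σ hσ
      obtain ⟨hg, ha, hb, hl, hu, htube⟩ := hstep
      have ih := lstw_facts S T hS hT v (lstep T c σ) hg
      obtain ⟨ig, ia, ib, il, iu, _, itube⟩ := ih
      rw [lstw_cons]
      refine ⟨ig, le_trans ia ha.le, le_trans ib hb.le, le_trans hl il, le_trans iu hu,
        fun _ => ⟨lt_of_le_of_lt ia ha, lt_of_le_of_lt ib hb⟩, fun x hx1 hx2 => ?_⟩
      have hx0 : 0 ≤ x := by
        have := ig.1; have := hg.1; linarith [il, hx1]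
      have hxT : x ≤ T := le_trans (le_trans hx2 iu) hg.2.2.1
      have t1 := htube x hx0 hxT
      have t2 := itube x hx1 hx2
      nlinarith [t1, t2]

lemma split_incomp : ∀ (v w : List Bool), ¬ w <+: v → ¬ v <+: w →
    ∃ (p v₁ w₁ : List Bool) (c c' : Bool), c ≠ c' ∧ v = p ++ c :: v₁ ∧ w = p ++ c' :: w₁
  | [], _, _, h2 => absurd List.nil_prefix h2
  | _ :: _, [], h1, _ => absurd List.nil_prefix h1
  | a :: v, b :: w, h1, h2 => by
      by_cases hab : a = b
      · subst hab
        obtain ⟨p, v₁, w₁, c, c', hcc, hv, hw⟩ :=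
          split_incomp v w (fun h => h1 (by simpa [List.cons_prefix_cons] using h))
            (fun h => h2 (by simpa [List.cons_prefix_cons] using h))
        exact ⟨a :: p, v₁, w₁, c, c', hcc, by simp [hv], by simp [hw]⟩
      · exact ⟨[], v, w, a, b, hab, rfl, rfl⟩


/-- Encoding binary words by lines: for `1 ≤ s < t` one can assign to each binary string
`w` rationals `a w, b w > 2` and a witness value `r w ∈ (s, t)` such that (i) if `w` is a
proper prefix of `v` then `a v < a w` and `b v < b w`, and (ii) if `w` is not a prefix of
`v` then the line of `v` lies strictly above the line of `w` at the witness value `r v`. -/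
theorem exists_lines_encoding_binary_strings (s t : ℝ) (hs : 1 ≤ s) (hst : s < t) :
    ∃ (a b : List Bool → ℚ) (r : List Bool → ℝ),
      (∀ w, 2 < a w ∧ 2 < b w) ∧
      (∀ w, s < r w ∧ r w < t) ∧
      (∀ v w : List Bool, w <+: v → v ≠ w → a v < a w ∧ b v < b w) ∧
      (∀ v w : List Bool, ¬ w <+: v →
        (a w : ℝ) * r v + (b w : ℝ) < (a v : ℝ) * r v + (b v : ℝ)) := by
  obtain ⟨s', hss', hs't⟩ := exists_rat_btwn hst
  obtain ⟨t', ht1, ht2⟩ := exists_rat_btwn hs't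
  have hq : s' < t' := by exact_mod_cast ht1
  have hS1 : 1 ≤ s' := by
    have : (1:ℝ) < (s' : ℝ) := lt_of_le_of_lt hs hss'
    exact_mod_cast this.le
  have hST : s' ≤ t' := hq.le
  set ρ : LSt := ⟨3, 3, s', t', 1/2⟩ with hρ
  have hroot : LGood s' t' ρ := ⟨le_refl _, hq, le_refl _, by norm_num⟩
  refine ⟨fun w => (lstw t' ρ w).a, fun w => (lstw t' ρ w).b,
    fun w => ((((lstw t' ρ w).l + (lstw t' ρ w).u) / 2 : ℚ) : ℝ), ?_, ?_, ?_, ?_⟩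
  · intro w
    dsimp only
    obtain ⟨⟨g1, g2, g3, g4⟩, ha, hb, -, -, -, htube⟩ := lstw_facts s' t' hS1 hST w ρ hroot
    set τ := lstw t' ρ w
    have hx1 : τ.l ≤ (τ.l + τ.u)/2 := by linarith
    have hx2 : (τ.l + τ.u)/2 ≤ τ.u := by linarith
    have t0 := htube ((τ.l + τ.u)/2) hx1 hx2
    have hxl : (1:ℚ) ≤ (τ.l + τ.u)/2 := by linarith
    simp only [show ρ.a = 3 from rfl, show ρ.b = 3 from rfl, show ρ.e = 1/2 from rfl]
      at t0 ha hb
    constructor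
    · nlinarith [mul_le_mul_of_nonneg_left hxl (by linarith : (0:ℚ) ≤ 3 - τ.a)]
    · nlinarith [mul_le_mul_of_nonneg_left hxl (by linarith : (0:ℚ) ≤ 3 - τ.a)]
  · intro w
    obtain ⟨⟨g1, g2, g3, g4⟩, -, -, -, -, -, -⟩ := lstw_facts s' t' hS1 hST w ρ hroot
    set τ := lstw t' ρ w
    have h1 : (s' : ℝ) ≤ ((τ.l + τ.u)/2 : ℚ) := by
      have : s' ≤ (τ.l + τ.u)/2 := by linarith
      exact_mod_cast this
    have h2 : (((τ.l + τ.u)/2 : ℚ) : ℝ) ≤ (t' : ℝ) := by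
      have : (τ.l + τ.u)/2 ≤ t' := by linarith
      exact_mod_cast this
    exact ⟨lt_of_lt_of_le hss' h1, lt_of_le_of_lt h2 ht2⟩
  · intro v w hpre hne
    dsimp only
    obtain ⟨u, hu⟩ := hpre
    have hu0 : u ≠ [] := by rintro rfl; simp at hu; exact hne hu.symm
    subst hu
    rw [lstw_append]
    obtain ⟨hg, -, -, -, -, -, -⟩ := lstw_facts s' t' hS1 hST w ρ hroot
    obtain ⟨-, -, -, -, -, hstrict, -⟩ := lstw_facts s' t' hS1 hST u (lstw t' ρ w) hg
    exact hstrict hu0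
  · intro v w hnp
    by_cases hvw : v <+: w
    · -- v is a proper prefix of w : line of w is strictly below everywhere on x > 0
      obtain ⟨u, hu⟩ := hvw
      have hu0 : u ≠ [] := by
        rintro rfl; simp at hu; subst hu; exact hnp (List.prefix_refl v)
      obtain ⟨hgv, -, -, -, -, -, -⟩ := lstw_facts s' t' hS1 hST v ρ hroot
      obtain ⟨-, -, -, -, -, hstrict, -⟩ := lstw_facts s' t' hS1 hST u (lstw t' ρ v) hgv
      subst hu
      dsimp only
      rw [lstw_append]
      set τ := lstw t' ρ v
      set τ' := lstw t' τ u
      obtain ⟨ha, hb⟩ := hstrict hu0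
      obtain ⟨g1, g2, g3, g4⟩ := hgv
      have hmid : (0:ℚ) < (τ.l + τ.u)/2 := by linarith
      have : τ'.a * ((τ.l + τ.u)/2) + τ'.b < τ.a * ((τ.l + τ.u)/2) + τ.b := by
        nlinarith [mul_lt_mul_of_pos_right ha hmid]
      exact_mod_cast this
    · obtain ⟨p, v₁, w₁, c, c', hcc, hv, hw⟩ := split_incomp v w hnp hvw
      subst hv; subst hw
      dsimp only
      obtain ⟨hgp, -, -, -, -, -, -⟩ := lstw_facts s' t' hS1 hST p ρ hroot
      set σ := lstw t' ρ p
      obtain ⟨hgc, -, -, -, -, tubec⟩ := lstep_facts s' t' hS1 hST c σ hgp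
      obtain ⟨hgc', hac', hbc', -, -, -⟩ := lstep_facts s' t' hS1 hST c' σ hgp
      have hc1 : lstw t' ρ (p ++ c :: v₁) = lstw t' (lstep t' c σ) v₁ := by
        rw [show p ++ c :: v₁ = (p ++ [c]) ++ v₁ by simp, lstw_append, lstw_append]; rfl
      have hc2 : lstw t' ρ (p ++ c' :: w₁) = lstw t' (lstep t' c' σ) w₁ := by
        rw [show p ++ c' :: w₁ = (p ++ [c']) ++ w₁ by simp, lstw_append, lstw_append]; rfl
      rw [hc1, hc2]
      obtain ⟨hgτ, -, -, il, iu, -, itube⟩ := lstw_facts s' t' hS1 hST v₁ (lstep t' c σ) hgc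
      obtain ⟨hgτ', ia', ib', -, -, -, -⟩ := lstw_facts s' t' hS1 hST w₁ (lstep t' c' σ) hgc'
      set σc := lstep t' c σ
      set σc' := lstep t' c' σ
      set τ := lstw t' σc v₁
      set τ' := lstw t' σc' w₁
      obtain ⟨k1, k2, k3, k4⟩ := hgτ
      set x : ℚ := (τ.l + τ.u)/2 with hx
      have hx1 : τ.l ≤ x := by rw [hx]; linarith
      have hx2 : x ≤ τ.u := by rw [hx]; linarith
      have hx0 : (0:ℚ) < x := by rw [hx]; linarith
      have hA := itube x hx1 hx2
      have hC := lstep_sep s' t' hS1 hST c c' hcc σ hgp x (le_trans il hx1) (le_trans hx2 iu)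
      have hB : τ'.a * x + τ'.b ≤ σc'.a * x + σc'.b := by
        nlinarith [mul_le_mul_of_nonneg_right ia' hx0.le]
      have hec : 0 < σc.e := hgc.2.2.2
      have heτ : 0 < τ.e := k4
      have goal : τ'.a * x + τ'.b < τ.a * x + τ.b := by nlinarith [hA, hB, hC]
      exact_mod_cast goal
end

section
/- Let p, q ∈ ℕ with 2 ≤ q ≤ p/2 − 1. If ξ̄_f(E_{p/(q−1)}) = p/(q−1) and ξ̄_f(E_{p/(q+1)}) = p/(q+1), then ξ̄_f(E_{p/q}) = p/q. -/
open Filter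

open FinGraph

namespace XbHelp

open Module FinGraph

/-! ### Arithmetic helpers for `cycDist` -/

lemma mod_spec (p m : ℕ) (hp : 0 < p) (hm : m < 2*p) :
    (m % p = m ∧ m < p) ∨ (m % p = m - p ∧ p ≤ m) := by
  rcases lt_or_ge m p with h | h
  · exact Or.inl ⟨Nat.mod_eq_of_lt h, h⟩
  · refine Or.inr ⟨?_, h⟩
    rw [Nat.mod_eq_sub_mod h, Nat.mod_eq_of_lt (by omega)]

lemma cycDist_formula (p i j : ℕ) (hi : i < p) (hj : j < p) :
    cycDist p i j = min (max i j - min i j) (p - (max i j - min i j)) := by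
  unfold cycDist
  rcases mod_spec p (p + i - j) (by omega) (by omega) with ⟨e1, l1⟩ | ⟨e1, l1⟩ <;>
    rcases mod_spec p (p + j - i) (by omega) (by omega) with ⟨e2, l2⟩ | ⟨e2, l2⟩ <;>
      rw [e1, e2] <;> omega

lemma cycDist_self (p a : ℕ) : cycDist p a a = 0 := by
  unfold cycDist
  rw [Nat.add_sub_cancel, Nat.mod_self]
  simp

lemma cycDist_shift (p i j k : ℕ) (hi : i < p) (hj : j < p) (hk : k < p) :
    cycDist p ((i+k) % p) ((j+k) % p) = cycDist p i j := by
  have hp : 0 < p := by omega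
  rw [cycDist_formula p _ _ (Nat.mod_lt _ hp) (Nat.mod_lt _ hp),
    cycDist_formula p i j hi hj]
  rcases mod_spec p (i+k) hp (by omega) with ⟨e1, l1⟩ | ⟨e1, l1⟩ <;>
    rcases mod_spec p (j+k) hp (by omega) with ⟨e2, l2⟩ | ⟨e2, l2⟩ <;>
      rw [e1, e2] <;> omega

/-! ### Graph-level helpers -/

lemma adj_iff {p Q : ℕ} (i j : Fin p) :
    (fracGraph p Q).G.Adj i j ↔ i ≠ j ∧ cycDist p i.val j.val < Q := Iff.rfl

lemma cycDist_ge_of {p Q : ℕ} {i j : Fin p} (hij : i ≠ j)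
    (h : ¬ (fracGraph p Q).G.Adj i j) : Q ≤ cycDist p i.val j.val := by
  by_contra h'
  exact h ⟨hij, by omega⟩

lemma nonadj_of {p Q : ℕ} {i j : Fin p} (h : Q ≤ cycDist p i.val j.val) :
    ¬ (fracGraph p Q).G.Adj i j := fun ha => absurd ha.2 (by omega)

lemma ne_of_cycDist {p Q : ℕ} (hQ : 0 < Q) {i j : Fin p}
    (h : Q ≤ cycDist p i.val j.val) : i ≠ j := by
  rintro rfl
  rw [cycDist_self] at h
  omega

lemma val_add_one {p : ℕ} [NeZero p] (hp : 2 ≤ p) (i : Fin p) :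
    ((i + 1 : Fin p)).val = (i.val + 1) % p := by
  rw [Fin.val_add, Fin.val_one', Nat.mod_eq_of_lt (show (1:ℕ) < p by omega)]

set_option maxHeartbeats 1000000 in
lemma stepU_nat (p q i j : ℕ) (hq : 2 ≤ q) (hp : 2*q+2 ≤ p) (hi : i < p) (hj : j < p)
    (hd : q - 1 ≤ cycDist p i j) :
    q ≤ cycDist p i ((j+1)%p) ∨ q ≤ cycDist p ((i+1)%p) j ∨ q ≤ cycDist p i j := by
  have hp0 : 0 < p := by omega
  rw [cycDist_formula p i j hi hj] at hd
  rw [cycDist_formula p i j hi hj, cycDist_formula p i _ hi (Nat.mod_lt _ hp0),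
    cycDist_formula p _ j (Nat.mod_lt _ hp0) hj]
  rcases mod_spec p (i+1) hp0 (by omega) with ⟨e1, l1⟩ | ⟨e1, l1⟩ <;>
    rcases mod_spec p (j+1) hp0 (by omega) with ⟨e2, l2⟩ | ⟨e2, l2⟩ <;>
      rw [e1, e2] <;> omega

set_option maxHeartbeats 1000000 in
lemma stepV_nat (p q i j : ℕ) (hq : 2 ≤ q) (hp : 2*q+2 ≤ p) (hi : i < p) (hj : j < p)
    (hd : q + 1 ≤ cycDist p i j) :
    q ≤ cycDist p i j ∧ q ≤ cycDist p i ((j+1)%p) ∧ q ≤ cycDist p ((i+1)%p) j ∧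
    q ≤ cycDist p ((i+1)%p) ((j+1)%p) := by
  have hp0 : 0 < p := by omega
  rw [cycDist_formula p i j hi hj] at hd
  rw [cycDist_formula p i j hi hj, cycDist_formula p i _ hi (Nat.mod_lt _ hp0),
    cycDist_formula p _ j (Nat.mod_lt _ hp0) hj,
    cycDist_formula p _ _ (Nat.mod_lt _ hp0) (Nat.mod_lt _ hp0)]
  rcases mod_spec p (i+1) hp0 (by omega) with ⟨e1, l1⟩ | ⟨e1, l1⟩ <;>
    rcases mod_spec p (j+1) hp0 (by omega) with ⟨e2, l2⟩ | ⟨e2, l2⟩ <;>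
      rw [e1, e2] <;> omega

/-- Step lemma for the intersection family: from cyclic distance `≥ q - 1` one of three
shifted pairs has cyclic distance `≥ q`. -/
lemma stepU {p q : ℕ} [NeZero p] (hq : 2 ≤ q) (hp : 2*q+2 ≤ p) {i j : Fin p}
    (hd : q - 1 ≤ cycDist p i.val j.val) :
    q ≤ cycDist p i.val ((j+1 : Fin p)).val ∨
    q ≤ cycDist p ((i+1 : Fin p)).val j.val ∨
    q ≤ cycDist p i.val j.val := by
  rw [val_add_one (by omega) i, val_add_one (by omega) j]
  exact stepU_nat p q i.val j.val hq hp i.isLt j.isLt hd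

/-- Step lemma for the sum family: from cyclic distance `≥ q + 1` all four shifted pairs
have cyclic distance `≥ q`. -/
lemma stepV {p q : ℕ} [NeZero p] (hq : 2 ≤ q) (hp : 2*q+2 ≤ p) {i j : Fin p}
    (hd : q + 1 ≤ cycDist p i.val j.val) :
    q ≤ cycDist p i.val j.val ∧
    q ≤ cycDist p i.val ((j+1 : Fin p)).val ∧
    q ≤ cycDist p ((i+1 : Fin p)).val j.val ∧
    q ≤ cycDist p ((i+1 : Fin p)).val ((j+1 : Fin p)).val := by
  rw [val_add_one (by omega) i, val_add_one (by omega) j]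
  exact stepV_nat p q i.val j.val hq hp i.isLt j.isLt hd

/-! ### The feasible set of `xibar` -/

/-- The set of feasible ratios appearing in the definition of `xibar`. -/
def xbSet (A : FinGraph) : Set ℝ :=
  { x : ℝ | ∃ d r : ℕ, 0 < d ∧ 0 < r ∧ x = (d : ℝ) / (r : ℝ) ∧
    ∃ W : A.V → Submodule ℂ (EuclideanSpace ℂ (Fin d)),
      (∀ v, Module.finrank ℂ (W v) = r) ∧
      ∀ v w : A.V, v ≠ w → ¬ A.G.Adj v w →
        ∀ x ∈ W v, ∀ y ∈ W w, (inner ℂ x y : ℂ) = 0 }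

lemma xibar_eq (A : FinGraph) : xibar A = sInf (xbSet A) := rfl

lemma xbSet_nonneg (A : FinGraph) : ∀ x ∈ xbSet A, (0:ℝ) ≤ x := by
  rintro x ⟨d, r, hd, hr, rfl, -⟩
  positivity

lemma xbSet_bddBelow (A : FinGraph) : BddBelow (xbSet A) :=
  ⟨0, xbSet_nonneg A⟩

lemma le_of_mem_xbSet {A : FinGraph} {c x : ℝ} (hA : xibar A = c) (hx : x ∈ xbSet A) :
    c ≤ x := by
  rw [← hA, xibar_eq]
  exact csInf_le (xbSet_bddBelow A) hx

/-! ### The block direct sum construction -/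

noncomputable def blockPhi {p d : ℕ} (V : Fin p → Submodule ℂ (EuclideanSpace ℂ (Fin d))) :
    (Π k : Fin p, V k) →ₗ[ℂ] EuclideanSpace ℂ (Fin (p*d)) where
  toFun v := WithLp.toLp 2 fun m =>
    (v (finProdFinEquiv.symm m).1 : EuclideanSpace ℂ (Fin d)) (finProdFinEquiv.symm m).2
  map_add' _ _ := rfl
  map_smul' _ _ := rfl

lemma blockPhi_apply {p d : ℕ} (V : Fin p → Submodule ℂ (EuclideanSpace ℂ (Fin d)))
    (v : Π k, V k) (k : Fin p) (a : Fin d) :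
    blockPhi V v (finProdFinEquiv (k, a)) = (v k : EuclideanSpace ℂ (Fin d)) a := by
  have h : finProdFinEquiv.symm (finProdFinEquiv (k, a)) = (k, a) := Equiv.symm_apply_apply _ _
  show (v (finProdFinEquiv.symm (finProdFinEquiv (k, a))).1 : EuclideanSpace ℂ (Fin d))
      (finProdFinEquiv.symm (finProdFinEquiv (k, a))).2 = _
  exact congrArg (fun x : Fin p × Fin d => (v x.1 : EuclideanSpace ℂ (Fin d)) x.2) h

lemma blockPhi_inj {p d : ℕ} (V : Fin p → Submodule ℂ (EuclideanSpace ℂ (Fin d))) :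
    Function.Injective (blockPhi V) := by
  intro u v h
  funext k
  apply Subtype.ext
  ext a
  have : blockPhi V u (finProdFinEquiv (k, a)) = blockPhi V v (finProdFinEquiv (k, a)) := by
    rw [h]
  rwa [blockPhi_apply, blockPhi_apply] at this

lemma finrank_blockPhi_range {p d : ℕ} (V : Fin p → Submodule ℂ (EuclideanSpace ℂ (Fin d))) :
    finrank ℂ (LinearMap.range (blockPhi V)) = ∑ k, finrank ℂ (V k) := by
  rw [LinearMap.finrank_range_of_inj (blockPhi_inj V), Module.finrank_pi_fintype]

lemma blockPhi_inner {p d : ℕ} (V W : Fin p → Submodule ℂ (EuclideanSpace ℂ (Fin d)))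
    (u : Π k, V k) (w : Π k, W k) :
    (inner ℂ (blockPhi V u) (blockPhi W w) : ℂ) =
      ∑ k, (inner ℂ (u k : EuclideanSpace ℂ (Fin d)) (w k : EuclideanSpace ℂ (Fin d)) : ℂ) := by
  rw [PiLp.inner_apply]
  rw [← Equiv.sum_comp (finProdFinEquiv (m := p) (n := d))]
  rw [Fintype.sum_prod_type]
  refine Finset.sum_congr rfl fun k _ => ?_
  rw [PiLp.inner_apply]
  refine Finset.sum_congr rfl fun a _ => ?_
  rw [blockPhi_apply, blockPhi_apply]

/-- Symmetrisation: from any family of subspaces with the orthogonality property for the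
fraction graph (with possibly unequal dimensions), the direct sum over all `p` rotations
yields a feasible ratio `(p*d) / (∑ dims)`. -/
lemma sym_mem {p d Q : ℕ} [NeZero p] (hd : 0 < d)
    (V : Fin p → Submodule ℂ (EuclideanSpace ℂ (Fin d)))
    (hV : ∀ i j : Fin p, i ≠ j → ¬ (fracGraph p Q).G.Adj i j →
        ∀ x ∈ V i, ∀ y ∈ V j, (inner ℂ x y : ℂ) = 0)
    (hT : 0 < ∑ k, finrank ℂ (V k)) :
    ((p*d : ℕ) : ℝ) / ((∑ k, finrank ℂ (V k) : ℕ) : ℝ) ∈ xbSet (fracGraph p Q) := by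
  have hp : 0 < p := Nat.pos_of_ne_zero (NeZero.ne p)
  have key1 : ∀ i : Fin p,
      finrank ℂ (LinearMap.range (blockPhi (fun k => V (i + k)))) = ∑ k, finrank ℂ (V k) := by
    intro i
    rw [finrank_blockPhi_range]
    exact Equiv.sum_comp (Equiv.addLeft i) (fun j => finrank ℂ (V j))
  have key2 : ∀ i j : Fin p, i ≠ j → ¬ (fracGraph p Q).G.Adj i j →
      ∀ x ∈ LinearMap.range (blockPhi (fun k => V (i + k))),
      ∀ y ∈ LinearMap.range (blockPhi (fun k => V (j + k))), (inner ℂ x y : ℂ) = 0 := by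
    intro i j hij hnadj x hx y hy
    obtain ⟨u, rfl⟩ := LinearMap.mem_range.1 hx
    obtain ⟨w, rfl⟩ := LinearMap.mem_range.1 hy
    rw [blockPhi_inner]
    refine Finset.sum_eq_zero fun k _ => ?_
    have hne : i + k ≠ j + k := fun h => hij (add_right_cancel h)
    have hQd : Q ≤ cycDist p i.val j.val := cycDist_ge_of hij hnadj
    have hsh : cycDist p ((i+k) : Fin p).val ((j+k) : Fin p).val = cycDist p i.val j.val := by
      rw [Fin.val_add, Fin.val_add]
      exact cycDist_shift p i.val j.val k.val i.isLt j.isLt k.isLt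
    exact hV (i+k) (j+k) hne (nonadj_of (by omega)) _ (u k).2 _ (w k).2
  exact ⟨p*d, ∑ k, finrank ℂ (V k), Nat.mul_pos hp hd, hT, rfl,
    fun i : Fin p => LinearMap.range (blockPhi (fun k => V (i + k))), key1, key2⟩

/-! ### The interval construction : upper bound -/

lemma interval_mem {p q : ℕ} (hq : 0 < q) (hqp : q < p) :
    ((p : ℕ) : ℝ) / ((q : ℕ) : ℝ) ∈ xbSet (fracGraph p q) := by
  have hp : 0 < p := by omega
  set idx : Fin p → Fin q → Fin p :=
    fun i k => ⟨(i.val + k.val) % p, Nat.mod_lt _ hp⟩ with hidx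
  have hinj : ∀ i : Fin p, Function.Injective (idx i) := by
    intro i k l h
    have hv : (i.val + k.val) % p = (i.val + l.val) % p := congrArg Fin.val h
    have hk := k.isLt
    have hl := l.isLt
    have hi := i.isLt
    rcases mod_spec p (i.val + k.val) hp (by omega) with ⟨e1, l1⟩ | ⟨e1, l1⟩ <;>
      rcases mod_spec p (i.val + l.val) hp (by omega) with ⟨e2, l2⟩ | ⟨e2, l2⟩ <;>
        rw [e1, e2] at hv <;> exact Fin.ext (by omega)
  have hON : ∀ i : Fin p,
      Orthonormal ℂ (fun k : Fin q => EuclideanSpace.single (idx i k) (1:ℂ)) := by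
    intro i
    rw [orthonormal_iff_ite]
    intro k l
    rw [EuclideanSpace.inner_single_left, EuclideanSpace.single_apply]
    by_cases h : k = l
    · subst h; simp
    · have h2 : idx i k ≠ idx i l := fun hh => h (hinj i hh)
      simp [h, h2, h2.symm]
  refine ⟨p, q, hp, hq, rfl,
    fun i => Submodule.span ℂ (Set.range (fun k : Fin q => EuclideanSpace.single (idx i k) (1:ℂ))),
    ?_, ?_⟩
  · intro i
    rw [finrank_span_eq_card (hON i).linearIndependent]
    simp
  · intro i j hij hnadj
    have hd : q ≤ cycDist p i.val j.val := cycDist_ge_of hij hnadj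
    refine fun x hx y hy => Submodule.IsOrtho.inner_eq ?_ hx hy
    rw [Submodule.isOrtho_span]
    rintro u ⟨k, rfl⟩ v ⟨l, rfl⟩
    have hne : idx i k ≠ idx j l := by
      refine Fin.ne_of_val_ne ?_
      show (i.val + k.val) % p ≠ (j.val + l.val) % p
      have hk := k.isLt
      have hl := l.isLt
      have hi := i.isLt
      have hj := j.isLt
      rw [cycDist_formula p i.val j.val hi hj] at hd
      rcases mod_spec p (i.val + k.val) hp (by omega) with ⟨e1, l1⟩ | ⟨e1, l1⟩ <;>
        rcases mod_spec p (j.val + l.val) hp (by omega) with ⟨e2, l2⟩ | ⟨e2, l2⟩ <;>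
          rw [e1, e2] <;> omega
    simp only [EuclideanSpace.inner_single_left, EuclideanSpace.single_apply]
    simp [hne, Ne.symm hne]

end XbHelp

open XbHelp Module

/-- Induction step: if `2 ≤ q ≤ p/2 - 1` and the complement of the projective rank takes
the expected values on `E_{p/(q-1)}` and `E_{p/(q+1)}`, then it does so on `E_{p/q}`. -/
theorem xibar_fracGraph_induction_step (p q : ℕ) (hq : 2 ≤ q) (hqp : 2 * q + 2 ≤ p)
    (h1 : xibar (fracGraph p (q - 1)) = (p : ℝ) / ((q : ℝ) - 1))
    (h2 : xibar (fracGraph p (q + 1)) = (p : ℝ) / ((q : ℝ) + 1)) :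
    xibar (fracGraph p q) = (p : ℝ) / (q : ℝ) := by
  have hp6 : 6 ≤ p := by omega
  haveI : NeZero p := ⟨by omega⟩
  have hq0 : 0 < q := by omega
  have hqp' : q < p := by omega
  have hqR : (0:ℝ) < (q:ℝ) := by exact_mod_cast hq0
  have hpR : (0:ℝ) < (p:ℝ) := by positivity
  have hub : xibar (fracGraph p q) ≤ (p : ℝ) / (q : ℝ) := by
    rw [xibar_eq]
    exact csInf_le (xbSet_bddBelow _) (interval_mem hq0 hqp')
  have hlb : (p : ℝ) / (q : ℝ) ≤ xibar (fracGraph p q) := by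
    by_contra hcon
    push_neg at hcon
    rw [xibar_eq] at hcon
    obtain ⟨x, hx, hxlt⟩ :=
      exists_lt_of_csInf_lt ⟨(p:ℝ)/(q:ℝ), interval_mem hq0 hqp'⟩ hcon
    obtain ⟨d, r, hd, hr, rfl, W, hWrank, hWorth⟩ := hx
    have hrR : (0:ℝ) < (r:ℝ) := by exact_mod_cast hr
    have hdr : q * d < p * r := by
      rw [div_lt_div_iff₀ hrR hqR] at hxlt
      have : (d:ℝ) * q < p * r := hxlt
      have h' : ((q*d : ℕ) : ℝ) < ((p*r : ℕ) : ℝ) := by push_cast; linarith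
      exact_mod_cast h'
    -- the two derived families
    set U : Fin p → Submodule ℂ (EuclideanSpace ℂ (Fin d)) :=
      fun i => W i ⊓ W (i + 1) with hU
    set Vf : Fin p → Submodule ℂ (EuclideanSpace ℂ (Fin d)) :=
      fun i => W i ⊔ W (i + 1) with hVf
    -- orthogonality for the intersection family w.r.t. fracGraph p (q-1)
    have hUorth : ∀ i j : Fin p, i ≠ j → ¬ (fracGraph p (q-1)).G.Adj i j →
        ∀ x ∈ U i, ∀ y ∈ U j, (inner ℂ x y : ℂ) = 0 := by
      intro i j hij hnadj x hx y hy
      have hd1 : q - 1 ≤ cycDist p i.val j.val := cycDist_ge_of hij hnadj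
      have hxi : x ∈ W i := hx.1
      have hxi1 : x ∈ W (i+1) := hx.2
      have hyj : y ∈ W j := hy.1
      have hyj1 : y ∈ W (j+1) := hy.2
      rcases stepU hq hqp hd1 with h | h | h
      · exact hWorth i (j+1) (ne_of_cycDist hq0 h) (nonadj_of h) x hxi y hyj1
      · exact hWorth (i+1) j (ne_of_cycDist hq0 h) (nonadj_of h) x hxi1 y hyj
      · exact hWorth i j (ne_of_cycDist hq0 h) (nonadj_of h) x hxi y hyj
    -- orthogonality for the sum family w.r.t. fracGraph p (q+1)
    have hVorth : ∀ i j : Fin p, i ≠ j → ¬ (fracGraph p (q+1)).G.Adj i j →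
        ∀ x ∈ Vf i, ∀ y ∈ Vf j, (inner ℂ x y : ℂ) = 0 := by
      intro i j hij hnadj x hx y hy
      have hd1 : q + 1 ≤ cycDist p i.val j.val := cycDist_ge_of hij hnadj
      obtain ⟨h00, h01, h10, h11⟩ := stepV hq hqp hd1
      obtain ⟨a, ha, b, hb, rfl⟩ := Submodule.mem_sup.1 hx
      obtain ⟨c, hc, e, he, rfl⟩ := Submodule.mem_sup.1 hy
      rw [inner_add_left, inner_add_right, inner_add_right]
      rw [hWorth i j (ne_of_cycDist hq0 h00) (nonadj_of h00) a ha c hc,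
        hWorth i (j+1) (ne_of_cycDist hq0 h01) (nonadj_of h01) a ha e he,
        hWorth (i+1) j (ne_of_cycDist hq0 h10) (nonadj_of h10) b hb c hc,
        hWorth (i+1) (j+1) (ne_of_cycDist hq0 h11) (nonadj_of h11) b hb e he]
      ring
    set S : ℕ := ∑ k, finrank ℂ (U k) with hS
    set T : ℕ := ∑ k, finrank ℂ (Vf k) with hT
    have hst : ∀ i : Fin p, finrank ℂ (Vf i) + finrank ℂ (U i) = 2 * r := by
      intro i
      rw [hVf, hU]
      rw [Submodule.finrank_sup_add_finrank_inf_eq, hWrank, hWrank i]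
      ring
    have hsum : T + S = p * (2 * r) := by
      rw [hT, hS, ← Finset.sum_add_distrib]
      rw [Finset.sum_congr rfl (fun i _ => hst i)]
      simp [Finset.sum_const, Finset.card_univ]
    have hTr : ∀ i : Fin p, r ≤ finrank ℂ (Vf i) := by
      intro i
      rw [← hWrank i]
      exact Submodule.finrank_mono le_sup_left
    have hTpos : 0 < T := by
      have i0 : Fin p := ⟨0, by omega⟩
      calc 0 < r := hr
        _ ≤ finrank ℂ (Vf i0) := hTr i0
        _ ≤ T := Finset.single_le_sum (f := fun k => finrank ℂ (Vf k))
          (fun _ _ => Nat.zero_le _) (Finset.mem_univ i0)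
    have hTle : T ≤ (q+1) * d := by
      have hmem := sym_mem hd Vf hVorth hTpos
      have hle := le_of_mem_xbSet h2 hmem
      rw [← hT] at hle
      rw [div_le_div_iff₀ (by exact_mod_cast (by omega : 0 < q+1))
        (by exact_mod_cast hTpos)] at hle
      have h' : ((p * T : ℕ) : ℝ) ≤ ((p * ((q+1) * d) : ℕ) : ℝ) := by push_cast; push_cast at hle; linarith
      have h'' : p * T ≤ p * ((q+1) * d) := by exact_mod_cast h'
      have := Nat.le_of_mul_le_mul_left h'' (by omega : 0 < p)
      omega
    have hSle : S ≤ (q-1) * d := by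
      rcases Nat.eq_zero_or_pos S with h0 | hSpos
      · omega
      · have hmem := sym_mem hd U hUorth hSpos
        have hle := le_of_mem_xbSet h1 hmem
        have hq1R : (0:ℝ) < (q:ℝ) - 1 := by
          have : (2:ℝ) ≤ (q:ℝ) := by exact_mod_cast hq
          linarith
        rw [← hS] at hle
        rw [div_le_div_iff₀ hq1R (by exact_mod_cast hSpos)] at hle
        have hcast : ((q:ℝ) - 1) = ((q - 1 : ℕ) : ℝ) := by
          rw [Nat.cast_sub (by omega : 1 ≤ q)]; norm_num
        rw [hcast] at hle
        have h' : ((p * S : ℕ) : ℝ) ≤ ((p * ((q-1) * d) : ℕ) : ℝ) := by push_cast; push_cast at hle; linarith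
        have h'' : p * S ≤ p * ((q-1) * d) := by exact_mod_cast h'
        have := Nat.le_of_mul_le_mul_left h'' (by omega : 0 < p)
        omega
    have e1 : (q+1)*d = q*d + d := by ring
    have e2 : (q-1)*d = q*d - 1*d := Nat.sub_mul q 1 d
    have e3 : d ≤ q*d := Nat.le_mul_of_pos_left d hq0
    have e4 : p*(2*r) = 2*(p*r) := by ring
    have e5 : 1*d = d := one_mul d
    omega
  exact le_antisymm hub hlb
end

section
/- Let G be a non-empty vertex-transitive finite simple graph, let d be a positive integer, and let {W_v}_{v ∈ V(G)} be an assignment of subspaces of ℂ^d to the vertices of G such that distinct non-adjacent vertices receive orthogonal subspaces. Then Σ_{v ∈ V(G)} dim W_v ≤ d · |V(G)| / ξ̄_f(G). -/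
open Filter

open FinGraph

/-- For a non-empty vertex-transitive graph `G` and any orthogonal subspace assignment
`{W_v}` in `ℂ^d`, the total dimension is at most `d·|V(G)| / ξ̄_f(G)`. -/
theorem sum_dim_le_of_orthogonal_assignment (A : FinGraph) (hne : Nonempty A.V)
    (hvt : IsVertexTransitive A) (d : ℕ) (hd : 0 < d)
    (W : A.V → Submodule ℂ (EuclideanSpace ℂ (Fin d)))
    (horth : ∀ v w : A.V, v ≠ w → ¬ A.G.Adj v w →
      ∀ x ∈ W v, ∀ y ∈ W w, (inner ℂ x y : ℂ) = 0) :
    (∑ v : A.V, (Module.finrank ℂ (W v) : ℝ)) ≤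
      (d : ℝ) * (Fintype.card A.V : ℝ) / xibar A := by
  classical
  haveI := hne
  obtain ⟨v₀⟩ := hne
  have hn : 0 < Fintype.card A.V := Fintype.card_pos
  set Q : Set ℝ := { x : ℝ | ∃ d r : ℕ, 0 < d ∧ 0 < r ∧ x = (d : ℝ) / (r : ℝ) ∧
    ∃ W : A.V → Submodule ℂ (EuclideanSpace ℂ (Fin d)),
      (∀ v, Module.finrank ℂ (W v) = r) ∧
      ∀ v w : A.V, v ≠ w → ¬ A.G.Adj v w →
        ∀ x ∈ W v, ∀ y ∈ W w, (inner ℂ x y : ℂ) = 0 } with hQdef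
  have hxibar : xibar A = sInf Q := rfl
  have hQnonneg : ∀ x ∈ Q, (0:ℝ) ≤ x := by
    rintro x ⟨d', r', hd', hr', rfl, -⟩
    positivity
  have hQbdd : BddBelow Q := ⟨0, hQnonneg⟩
  have hQge1 : ∀ x ∈ Q, (1:ℝ) ≤ x := by
    rintro x ⟨d', r', hd', hr', rfl, W', hW', -⟩
    have hrd : r' ≤ d' := by
      have h1 := Submodule.finrank_le (W' v₀)
      rwa [hW' v₀, finrank_euclideanSpace_fin] at h1
    rw [le_div_iff₀ (by exact_mod_cast hr')]
    rw [one_mul]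
    exact_mod_cast hrd
  set S : ℕ := ∑ v, Module.finrank ℂ (W v) with hS
  have hsum : (∑ v : A.V, (Module.finrank ℂ (W v) : ℝ)) = (S : ℝ) :=
    (Nat.cast_sum _ _).symm
  rw [hsum]
  rcases Nat.eq_zero_or_pos S with hS0 | hSpos
  · rw [hS0]
    push_cast
    apply div_nonneg (by positivity)
    rw [hxibar]
    exact Real.sInf_nonneg hQnonneg
  -- automorphism group
  haveI : Fintype (A.G ≃g A.G) :=
    Fintype.ofInjective (fun e : A.G ≃g A.G => e.toEquiv) RelIso.toEquiv_injective
  haveI : Nonempty (A.G ≃g A.G) := ⟨RelIso.refl _⟩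
  set k : ℕ := Fintype.card (A.G ≃g A.G) with hk
  have hkpos : 0 < k := Fintype.card_pos
  -- the per-vertex symmetrized rank is constant
  have hrconst : ∀ v : A.V, (∑ σ : A.G ≃g A.G, Module.finrank ℂ (W (σ v)))
      = ∑ σ : A.G ≃g A.G, Module.finrank ℂ (W (σ v₀)) := by
    intro v
    obtain ⟨e, he⟩ := hvt v v₀
    refine (Fintype.sum_equiv
      ⟨fun σ => RelIso.trans e σ, fun σ => RelIso.trans e.symm σ, fun σ => ?_, fun σ => ?_⟩
      (fun σ => Module.finrank ℂ (W (σ v₀)))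
      (fun σ => Module.finrank ℂ (W (σ v))) (fun σ => ?_)).symm
    · exact RelIso.ext fun x => by simp
    · exact RelIso.ext fun x => by simp
    · show Module.finrank ℂ (W (σ v₀)) = Module.finrank ℂ (W ((RelIso.trans e σ) v))
      rw [show ((RelIso.trans e σ) v) = σ (e v) from rfl, he]
  set r : ℕ := ∑ σ : A.G ≃g A.G, Module.finrank ℂ (W (σ v₀)) with hr
  have hnr : Fintype.card A.V * r = k * S := by
    calc Fintype.card A.V * r = ∑ _v : A.V, r := by
          rw [Finset.sum_const, Finset.card_univ, smul_eq_mul]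
      _ = ∑ v : A.V, ∑ σ : A.G ≃g A.G, Module.finrank ℂ (W (σ v)) :=
          Finset.sum_congr rfl fun v _ => (hrconst v).symm
      _ = ∑ σ : A.G ≃g A.G, ∑ v : A.V, Module.finrank ℂ (W (σ v)) := Finset.sum_comm
      _ = ∑ _σ : A.G ≃g A.G, S :=
          Finset.sum_congr rfl fun σ _ =>
            Fintype.sum_equiv σ.toEquiv _ _ (fun v => rfl)
      _ = k * S := by rw [Finset.sum_const, Finset.card_univ, smul_eq_mul]
  have hrpos : 0 < r := by
    rcases Nat.eq_zero_or_pos r with h0 | h; swap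
    · exact h
    · exfalso
      have := hnr
      rw [h0, Nat.mul_zero] at this
      exact (Nat.mul_pos hkpos hSpos).ne' this.symm
  -- the symmetrized subspace assignment
  let Φ : ∀ _ : A.V, (∀ σ : A.G ≃g A.G, W (σ _)) →ₗ[ℂ]
      (PiLp 2 fun _ : A.G ≃g A.G => EuclideanSpace ℂ (Fin d)) :=
    fun v => (WithLp.linearEquiv 2 ℂ
        (∀ _ : A.G ≃g A.G, EuclideanSpace ℂ (Fin d))).symm.toLinearMap ∘ₗ
      LinearMap.pi fun σ => (W (σ v)).subtype ∘ₗ LinearMap.proj σ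
  have hΦ : ∀ (v : A.V) (f : ∀ σ : A.G ≃g A.G, W (σ v)) (σ : A.G ≃g A.G),
      Φ v f σ = (f σ : EuclideanSpace ℂ (Fin d)) := fun _ _ _ => rfl
  have hΦinj : ∀ v, Function.Injective (Φ v) := by
    intro v f g h
    funext σ
    exact Subtype.ext (congrArg (fun p : PiLp 2 (fun _ : A.G ≃g A.G => EuclideanSpace ℂ (Fin d)) => WithLp.ofLp p σ) h)
  have hU : ∀ v, Module.finrank ℂ (LinearMap.range (Φ v)) = r := by
    intro v
    rw [LinearMap.finrank_range_of_inj (hΦinj v), Module.finrank_pi_fintype ℂ, hrconst v]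
  have hUorth : ∀ v w : A.V, v ≠ w → ¬ A.G.Adj v w →
      ∀ x ∈ LinearMap.range (Φ v), ∀ y ∈ LinearMap.range (Φ w), (inner ℂ x y : ℂ) = 0 := by
    rintro v w hvw hadj x ⟨f, rfl⟩ y ⟨g, rfl⟩
    rw [PiLp.inner_apply]
    refine Finset.sum_eq_zero fun σ _ => ?_
    exact horth (σ v) (σ w) (fun h => hvw (σ.toEquiv.injective h))
      (fun h => hadj (σ.map_adj_iff.mp h)) _ (f σ).2 _ (g σ).2
  haveI : FiniteDimensional ℂ (PiLp 2 fun _ : A.G ≃g A.G => EuclideanSpace ℂ (Fin d)) :=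
    inferInstance
  set D : ℕ :=
    Module.finrank ℂ (PiLp 2 fun _ : A.G ≃g A.G => EuclideanSpace ℂ (Fin d)) with hD
  have hDval : D = d * k := by
    rw [hD,
      (WithLp.linearEquiv 2 ℂ (∀ _ : A.G ≃g A.G, EuclideanSpace ℂ (Fin d))).finrank_eq,
      Module.finrank_pi_fintype ℂ]
    simp [finrank_euclideanSpace_fin, Finset.sum_const, Finset.card_univ, mul_comm]
    exact Or.inl rfl
  let B := stdOrthonormalBasis ℂ (PiLp 2 fun _ : A.G ≃g A.G => EuclideanSpace ℂ (Fin d))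
  have hmem : ((D:ℝ)/(r:ℝ)) ∈ Q := by
    refine ⟨D, r, by rw [hDval]; exact Nat.mul_pos hd hkpos, hrpos, rfl,
      fun v => (LinearMap.range (Φ v)).map
        (B.repr.toLinearEquiv : _ →ₗ[ℂ] EuclideanSpace ℂ (Fin D)), fun v => ?_, ?_⟩
    · rw [LinearEquiv.finrank_map_eq]
      exact hU v
    · rintro v w hvw hadj x hx y hy
      obtain ⟨a, ha, rfl⟩ := hx
      obtain ⟨b, hb, rfl⟩ := hy
      exact (B.repr.inner_map_map a b).trans (hUorth v w hvw hadj a ha b hb)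
  have hle : xibar A ≤ (D:ℝ)/(r:ℝ) := hxibar ▸ csInf_le hQbdd hmem
  have hx1 : (1:ℝ) ≤ xibar A := hxibar ▸ le_csInf ⟨_, hmem⟩ hQge1
  have hxpos : (0:ℝ) < xibar A := zero_lt_one.trans_le hx1
  have hDr : (D:ℝ)/(r:ℝ) = (d:ℝ) * (Fintype.card A.V : ℝ) / (S:ℝ) := by
    rw [div_eq_div_iff (by exact_mod_cast hrpos.ne') (by exact_mod_cast hSpos.ne')]
    have hnat : D * S = d * Fintype.card A.V * r := by
      rw [hDval, mul_assoc, mul_assoc, ← hnr]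
    exact_mod_cast hnat
  rw [le_div_iff₀ hxpos]
  calc (S:ℝ) * xibar A ≤ (S:ℝ) * ((D:ℝ)/(r:ℝ)) := by
        exact mul_le_mul_of_nonneg_left hle (by positivity)
    _ = (S:ℝ) * ((d:ℝ) * (Fintype.card A.V : ℝ) / (S:ℝ)) := by rw [hDr]
    _ = (d:ℝ) * (Fintype.card A.V : ℝ) := by
        field_simp
end

section
/- Let G be a non-empty vertex-transitive finite simple graph, let U ∈ 𝒫(G) be the uniform distribution on its vertices, and let f ∈ Δ(𝒢). Then f(G) = f(G, U), where f(G, U) is the probabilistic refinement of f at the uniform distribution. -/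
open Filter

open FinGraph

namespace FinGraph

/-- The empirical distribution of a tuple `x : Fin n → V`. -/
noncomputable def empDist (A : FinGraph) (n : ℕ) (x : Fin n → A.V) (v : A.V) : ℝ :=
  letI : DecidableEq A.V := Classical.decEq _
  ((Finset.univ.filter fun i : Fin n => x i = v).card : ℝ) / (n : ℝ)

/-- The set `T^n_{B_ε(P)}` of `n`-tuples whose empirical distribution is within `ε`
of `P` in `ℓ1`-norm. -/
def typSet (A : FinGraph) (P : A.V → ℝ) (ε : ℝ) (n : ℕ) : Set (Fin n → A.V) :=
  { x | ∑ v : A.V, |A.empDist n x v - P v| ≤ ε }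

/-- The induced subgraph `G^{⊠ n}[T^n_{B_ε(P)}]`, as a bundled finite graph. -/
noncomputable def inducedTypGraph (A : FinGraph) (P : A.V → ℝ) (ε : ℝ) (n : ℕ) :
    FinGraph :=
  letI : Fintype (A.typSet P ε n) := (Set.toFinite _).fintype
  mk' (A.typSet P ε n) (SimpleGraph.induce (A.typSet P ε n) (strongPowAdj A.G n))

/-- The probabilistic refinement `f(G, P)` of a spectral point `f`:
`inf_{ε>0} limsup_{n→∞} f(G^{⊠n}[T^n_{B_ε(P)}])^{1/n}`. -/
noncomputable def probRefine (A : FinGraph) (f : FinGraph → ℝ) (P : A.V → ℝ) : ℝ :=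
  ⨅ ε : {e : ℝ // 0 < e},
    Filter.limsup (fun n : ℕ => f (A.inducedTypGraph P ε.1 n) ^ ((1 : ℝ) / (n : ℝ)))
      Filter.atTop

end FinGraph

theorem Equiv.Perm.apply_inv_self {α : Type*} (f : Equiv.Perm α) (x : α) : f (f⁻¹ x) = x :=
  Equiv.apply_symm_apply f x

theorem Equiv.Perm.inv_apply_self {α : Type*} (f : Equiv.Perm α) (x : α) : f⁻¹ (f x) = x :=
  Equiv.symm_apply_apply f x

namespace FinGraph

/-- Complement isomorphism from an isomorphism. -/
def isoCompl {V W : Type} {G : SimpleGraph V} {H : SimpleGraph W} (e : G ≃g H) :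
    Gᶜ ≃g Hᶜ where
  toEquiv := e.toEquiv
  map_rel_iff' := by
    intro a b
    simp [SimpleGraph.compl_adj, e.map_adj_iff, e.toEquiv.injective.ne_iff]

/-- Induced subgraph as a bundled graph. -/
noncomputable def induceSet (B : FinGraph) (S : Set B.V) : FinGraph :=
  letI : Fintype S := (Set.toFinite _).fintype
  mk' S (SimpleGraph.induce S B.G)

lemma inducedTypGraph_eq (A : FinGraph) (P : A.V → ℝ) (ε : ℝ) (n : ℕ) :
    A.inducedTypGraph P ε n = (A.spow n).induceSet (A.typSet P ε n) := rfl

section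

variable {f : FinGraph → ℝ} (hf : f ∈ Delta)
include hf

lemma f_nonneg (A : FinGraph) : 0 ≤ f A := hf.1 A

lemma f_mono {A B : FinGraph} (h : cohomLE A B) : f A ≤ f B := hf.2.2.2.2 A B h

/-- f is invariant under graph isomorphism. -/
lemma f_iso {A B : FinGraph} (e : A.G ≃g B.G) : f A = f B := by
  have h1 : cohomLE A B := ⟨(isoCompl e).toHom⟩
  have h2 : cohomLE B A := ⟨(isoCompl e.symm).toHom⟩
  exact le_antisymm (f_mono hf h1) (f_mono hf h2)

lemma f_empty (B : FinGraph) (h : IsEmpty B.V) : f B = 0 := by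
  have h0 : IsEmpty (edgeless 0).V := by
    show IsEmpty (Fin 0); infer_instance
  have e : B.G ≃g (edgeless 0).G := by
    refine ⟨@Equiv.equivOfIsEmpty _ _ h h0, ?_⟩
    intro a; exact h.elim a
  rw [f_iso hf e, hf.2.1 0]; simp

lemma f_one_le (B : FinGraph) (h : Nonempty B.V) : 1 ≤ f B := by
  have : cohomLE (edgeless 1) B := by
    refine ⟨⟨fun _ => h.some, ?_⟩⟩
    intro a b hab
    have : Subsingleton (edgeless 1).V := by show Subsingleton (Fin 1); infer_instance
    exact absurd (Subsingleton.elim a b) hab.ne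
  have := f_mono hf this
  rwa [hf.2.1 1, Nat.cast_one] at this

end

end FinGraph
namespace FinGraph

lemma adj_or_eq_iff {V : Type} {G : SimpleGraph V} {m : ℕ} (x y : Fin m → V) :
    ((strongPowAdj G m).Adj x y ∨ x = y) ↔ ∀ i, G.Adj (x i) (y i) ∨ x i = y i := by
  constructor
  · rintro (⟨-, h⟩ | rfl) i
    · exact h i
    · exact Or.inr rfl
  · intro h
    by_cases hxy : x = y
    · exact Or.inr hxy
    · exact Or.inl ⟨hxy, h⟩

/-- The equivalence `(Fin (n+1) → V) ≃ V × (Fin n → V)`. -/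
def consEquiv (V : Type) (n : ℕ) : (Fin (n + 1) → V) ≃ V × (Fin n → V) where
  toFun x := (x 0, fun i => x i.succ)
  invFun p := Fin.cons p.1 p.2
  left_inv x := by
    funext i
    refine Fin.cases ?_ ?_ i <;> simp
  right_inv p := by simp

/-- Iso between the `(n+1)`-st strong power and `A ⊠ A^{⊠ n}`. -/
def spowSuccIso (A : FinGraph) (n : ℕ) :
    (A.spow (n + 1)).G ≃g (A.sprod (A.spow n)).G where
  toEquiv := consEquiv A.V n
  map_rel_iff' := by
    intro x y
    show (strongProdAdj A.G (strongPowAdj A.G n)).Adj _ _ ↔ (strongPowAdj A.G (n+1)).Adj x y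
    simp only [strongProdAdj, strongPowAdj, consEquiv, Equiv.coe_fn_mk]
    constructor
    · rintro ⟨h1, h2, h3⟩
      have h3' := (adj_or_eq_iff _ _).1 h3
      refine ⟨?_, ?_⟩
      · rintro rfl; exact h1 rfl
      · intro i
        refine Fin.cases ?_ ?_ i
        · exact h2
        · intro j; exact h3' j
    · rintro ⟨h1, h2⟩
      refine ⟨?_, h2 0, (adj_or_eq_iff _ _).2 fun j => h2 j.succ⟩
      intro hp
      apply h1
      have hp1 := congrArg Prod.fst hp
      have hp2 := congrArg Prod.snd hp
      change x 0 = y 0 at hp1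
      change (fun i : Fin n => x i.succ) = (fun i : Fin n => y i.succ) at hp2
      funext i
      refine Fin.cases ?_ ?_ i
      · exact hp1
      · intro j; exact congrFun hp2 j

/-- Iso between the `0`-th strong power and `E_1`. -/
def spowZeroIso (A : FinGraph) : (A.spow 0).G ≃g (edgeless 1).G where
  toEquiv := Equiv.ofUnique (Fin 0 → A.V) (Fin 1)
  map_rel_iff' := by
    intro x y
    show (⊥ : SimpleGraph (Fin 1)).Adj _ _ ↔ (strongPowAdj A.G 0).Adj x y
    simp only [SimpleGraph.bot_adj, strongPowAdj, false_iff]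
    exact ⟨fun h => ((SimpleGraph.bot_adj _ _).1 h).elim,
      fun ⟨h, _⟩ => h (funext fun i => i.elim0)⟩

section
variable {f : FinGraph → ℝ} (hf : f ∈ Delta)
include hf

lemma f_spow (A : FinGraph) (n : ℕ) : f (A.spow n) = f A ^ n := by
  induction n with
  | zero =>
    rw [f_iso hf (spowZeroIso A), hf.2.1 1]
    simp
  | succ n ih =>
    rw [f_iso hf (spowSuccIso A n), hf.2.2.1, ih, pow_succ]
    ring

end

end FinGraph
namespace FinGraph

@[simp] lemma induceSet_adj (B : FinGraph) (S : Set B.V) (a b : (B.induceSet S).V) :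
    (B.induceSet S).G.Adj a b ↔ B.G.Adj a.1 b.1 := Iff.rfl

section
variable {f : FinGraph → ℝ} (hf : f ∈ Delta)
include hf

/-- Splitting a graph along a vertex subset. -/
lemma f_split (B : FinGraph) (S : Set B.V) :
    f B ≤ f (B.induceSet S) + f (B.induceSet Sᶜ) := by
  classical
  have hco : cohomLE B ((B.induceSet S).dUnion (B.induceSet Sᶜ)) := by
    refine ⟨⟨fun v => if h : v ∈ S then Sum.inl ⟨v, h⟩ else Sum.inr ⟨v, h⟩, ?_⟩⟩
    rintro v w ⟨hne, hnadj⟩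
    rw [SimpleGraph.compl_adj]
    constructor
    · intro h
      by_cases hv : v ∈ S <;> by_cases hw : w ∈ S <;> simp [hv, hw] at h <;>
        injection h with h' <;> exact hne (congrArg Subtype.val h')
    · rintro (⟨a, b, ha, hb, hab⟩ | ⟨a, b, ha, hb, hab⟩) <;>
        by_cases hv : v ∈ S <;> by_cases hw : w ∈ S <;> simp [hv, hw] at ha hb <;>
        injection ha with ha' <;> injection hb with hb' <;>
        subst ha' <;> subst hb' <;>
        exact hnadj hab
  calc f B ≤ f ((B.induceSet S).dUnion (B.induceSet Sᶜ)) := f_mono hf hco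
    _ = _ := hf.2.2.2.1 _ _

end

end FinGraph
namespace FinGraph

/-- Iso collapsing a double induced subgraph. -/
def induceInduceIso (B : FinGraph) (S : Set B.V) (T : Set B.V) (hTS : T ⊆ S) :
    ((B.induceSet S).induceSet {w : (B.induceSet S).V | w.1 ∈ T}).G ≃g
      (B.induceSet T).G where
  toEquiv :=
  { toFun := fun w => ⟨w.1.1, w.2⟩
    invFun := fun v => ⟨⟨v.1, hTS v.2⟩, v.2⟩
    left_inv := fun w => rfl
    right_inv := fun v => rfl }
  map_rel_iff' := by intro a b; exact Iff.rfl

section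
variable {f : FinGraph → ℝ} (hf : f ∈ Delta)
include hf

/-- Covering bound: f is at most the sum over the fibers of any classification map. -/
lemma f_cover {I : Type} [DecidableEq I] (s : Finset I) :
    ∀ (B : FinGraph) (t : B.V → I), (∀ v, t v ∈ s) →
      f B ≤ ∑ i ∈ s, f (B.induceSet {v | t v = i}) := by
  classical
  induction s using Finset.induction with
  | empty =>
    intro B t ht
    have : IsEmpty B.V := ⟨fun v => absurd (ht v) (Finset.notMem_empty _)⟩
    rw [f_empty hf B this, Finset.sum_empty]
  | @insert a s' ha ih =>
    intro B t ht
    have h1 : f B ≤ f (B.induceSet {v | t v = a}) + f (B.induceSet {v | t v = a}ᶜ) :=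
      f_split hf B _
    set B' := B.induceSet {v | t v = a}ᶜ with hB'
    have h2 : f B' ≤ ∑ i ∈ s', f (B'.induceSet {w | t w.1 = i}) := by
      refine ih B' (fun w => t w.1) ?_
      intro w
      have := ht w.1
      rcases Finset.mem_insert.1 this with h | h
      · exact absurd h w.2
      · exact h
    have h3 : ∀ i ∈ s', f (B'.induceSet {w | t w.1 = i}) = f (B.induceSet {v | t v = i}) := by
      intro i hi
      have hia : i ≠ a := fun h => ha (h ▸ hi)
      have hTS : {v : B.V | t v = i} ⊆ {v | t v = a}ᶜ := by
        intro v hv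
        simp only [Set.mem_compl_iff, Set.mem_setOf_eq] at *
        rw [hv]; exact hia
      exact f_iso hf (induceInduceIso B _ _ hTS)
    rw [Finset.sum_insert ha]
    calc f B ≤ f (B.induceSet {v | t v = a}) + f B' := h1
      _ ≤ f (B.induceSet {v | t v = a}) + ∑ i ∈ s', f (B'.induceSet {w | t w.1 = i}) := by
          linarith
      _ = _ := by rw [Finset.sum_congr rfl h3]

end

end FinGraph
namespace FinGraph

open Finset

variable (A : FinGraph)

/-- Number of occurrences of `v` in the tuple `x`. -/
noncomputable def cnt {n : ℕ} (x : Fin n → A.V) (v : A.V) : ℕ :=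
  letI : DecidableEq A.V := Classical.decEq _
  (Finset.univ.filter fun i : Fin n => x i = v).card

lemma sum_cnt {n : ℕ} (x : Fin n → A.V) : ∑ v : A.V, A.cnt x v = n := by
  classical
  unfold cnt
  rw [← Finset.card_eq_sum_card_fiberwise (fun i _ => Finset.mem_univ (x i))]
  · simp
  -- may have extra goals
  
lemma empDist_eq {n : ℕ} (x : Fin n → A.V) (v : A.V) :
    A.empDist n x v = (A.cnt x v : ℝ) / (n : ℝ) := rfl

end FinGraph
namespace FinGraph

open Finset

variable (A : FinGraph)

/-- The automorphisms of `A` as a finset of permutations. -/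
noncomputable def autS : Finset (Equiv.Perm A.V) :=
  letI : DecidableEq A.V := Classical.decEq _
  @Finset.filter _ (fun e => ∀ a b, A.G.Adj (e a) (e b) ↔ A.G.Adj a b)
    (Classical.decPred _) Finset.univ

lemma mem_autS (e : Equiv.Perm A.V) :
    e ∈ A.autS ↔ ∀ a b, A.G.Adj (e a) (e b) ↔ A.G.Adj a b := by
  unfold autS
  rw [@Finset.mem_filter _ _ (Classical.decPred _)]
  simp only [Finset.mem_univ, true_and]

lemma one_mem_autS : (1 : Equiv.Perm A.V) ∈ A.autS := by
  rw [mem_autS]; intro a b; rfl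

lemma autS_nonempty : A.autS.Nonempty := ⟨1, A.one_mem_autS⟩

lemma mul_mem_autS {e₁ e₂ : Equiv.Perm A.V} (h₁ : e₁ ∈ A.autS) (h₂ : e₂ ∈ A.autS) :
    e₁ * e₂ ∈ A.autS := by
  rw [mem_autS] at *
  intro a b
  rw [Equiv.Perm.mul_apply, Equiv.Perm.mul_apply, h₁, h₂]

lemma inv_mem_autS {e : Equiv.Perm A.V} (h : e ∈ A.autS) : e⁻¹ ∈ A.autS := by
  rw [mem_autS] at *
  intro a b
  conv_rhs => rw [← Equiv.Perm.apply_inv_self e a, ← Equiv.Perm.apply_inv_self e b, h]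

/-- Transitivity in terms of `autS`. -/
lemma autS_transitive (hvt : IsVertexTransitive A) (u v : A.V) :
    ∃ e ∈ A.autS, e u = v := by
  obtain ⟨e, he⟩ := hvt u v
  exact ⟨e.toEquiv, (A.mem_autS _).2 fun a b => e.map_adj_iff, he⟩

/-- All fibers `{e ∈ autS | e w = v}` have the same cardinality. -/
lemma autS_fiber_card_eq (hvt : IsVertexTransitive A) (w v w' v' : A.V) :
    letI : DecidableEq A.V := Classical.decEq _
    (A.autS.filter fun e => e w = v).card = (A.autS.filter fun e => e w' = v').card := by
  classical
  obtain ⟨σ, hσ, hσv⟩ := A.autS_transitive hvt v v'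
  obtain ⟨τ, hτ, hτw⟩ := A.autS_transitive hvt w' w
  apply Finset.card_bij (fun e _ => σ * e * τ)
  · intro e he
    rw [Finset.mem_filter] at he ⊢
    refine ⟨A.mul_mem_autS (A.mul_mem_autS hσ he.1) hτ, ?_⟩
    simp only [Equiv.Perm.mul_apply, hτw, he.2, hσv]
  · intro e₁ h₁ e₂ h₂ hee
    have : ∀ x, e₁ x = e₂ x := by
      intro x
      have := congrArg (fun p => σ⁻¹ (p (τ⁻¹ x))) hee
      simpa using this
    exact Equiv.ext this
  · intro e he
    rw [Finset.mem_filter] at he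
    refine ⟨σ⁻¹ * e * τ⁻¹, ?_, ?_⟩
    · rw [Finset.mem_filter]
      refine ⟨A.mul_mem_autS (A.mul_mem_autS (A.inv_mem_autS hσ) he.1) (A.inv_mem_autS hτ), ?_⟩
      simp only [Equiv.Perm.mul_apply]
      rw [← hτw, Equiv.Perm.inv_apply_self, he.2, ← hσv, Equiv.Perm.inv_apply_self]
    · ext x
      simp [Equiv.Perm.mul_apply]

/-- The total count identity: `card autS = card V * fiber`. -/
lemma autS_card_eq (hvt : IsVertexTransitive A) (w v : A.V) :
    letI : DecidableEq A.V := Classical.decEq _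
    A.autS.card = Fintype.card A.V * (A.autS.filter fun e => e w = v).card := by
  classical
  rw [Finset.card_eq_sum_card_fiberwise (f := fun e => e w) (t := Finset.univ)
    (fun e _ => Finset.mem_univ _)]
  rw [Finset.sum_congr rfl fun u _ => A.autS_fiber_card_eq hvt w u w v]
  simp [Finset.sum_const, Finset.card_univ, mul_comm]

end FinGraph
namespace FinGraph

open Finset

variable (A : FinGraph)

lemma cnt_comp_perm {n : ℕ} (σ : Equiv.Perm A.V) (x : Fin n → A.V) (v : A.V) :
    A.cnt (fun i => σ (x i)) v = A.cnt x (σ⁻¹ v) := by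
  classical
  unfold cnt
  apply Finset.card_bij' (fun (i : Fin n) _ => i) (fun (i : Fin n) _ => i)
  · intro a ha
    simp only [Finset.mem_filter, Finset.mem_univ, true_and] at *
    rw [Equiv.Perm.eq_inv_iff_eq]
    exact ha
  · intro a ha
    simp only [Finset.mem_filter, Finset.mem_univ, true_and] at *
    rw [Equiv.Perm.eq_inv_iff_eq] at ha
    exact ha
  · intro a _; rfl
  · intro a _; rfl

lemma cnt_le {n : ℕ} (x : Fin n → A.V) (v : A.V) : A.cnt x v ≤ n := by
  classical
  unfold cnt
  calc (Finset.univ.filter fun i : Fin n => x i = v).card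
      ≤ (Finset.univ : Finset (Fin n)).card := Finset.card_filter_le _ _
    _ = n := by simp

lemma cnt_block {g n : ℕ} (w : Fin g → Fin n → A.V) (v : A.V) :
    A.cnt (fun p : Fin (g * n) =>
        w (finProdFinEquiv.symm p).1 (finProdFinEquiv.symm p).2) v
      = ∑ j : Fin g, A.cnt (w j) v := by
  classical
  unfold cnt
  have h1 : (Finset.univ.filter fun p : Fin (g * n) =>
      w (finProdFinEquiv.symm p).1 (finProdFinEquiv.symm p).2 = v).card
      = (Finset.univ.filter fun q : Fin g × Fin n => w q.1 q.2 = v).card := by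
    apply Finset.card_bij' (fun p _ => finProdFinEquiv.symm p)
      (fun q _ => finProdFinEquiv q)
    · intro p hp
      rw [Finset.mem_filter] at hp ⊢
      exact ⟨Finset.mem_univ _, hp.2⟩
    · intro q hq
      rw [Finset.mem_filter] at hq ⊢
      refine ⟨Finset.mem_univ _, ?_⟩
      simpa using hq.2
    · intro p _; exact finProdFinEquiv.apply_symm_apply p
    · intro q _; exact finProdFinEquiv.symm_apply_apply q
  rw [h1, Finset.card_filter, ← Finset.univ_product_univ, Finset.sum_product]
  exact Finset.sum_congr rfl fun j _ => (Finset.card_filter _ _).symm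

/-- Sum of `Q ∘ σ⁻¹` over the automorphism group: `(∑_σ Q(σ⁻¹ v)) · |V| = n · |autS|`. -/
lemma sum_autS_eq (hvt : IsVertexTransitive A) {n : ℕ} (Q : A.V → ℕ)
    (hQ : ∑ v, Q v = n) (v : A.V) :
    (∑ σ ∈ A.autS, Q (σ⁻¹ v)) * Fintype.card A.V = n * A.autS.card := by
  classical
  have hfib : ∀ w : A.V,
      (A.autS.filter fun σ => σ⁻¹ v = w) = (A.autS.filter fun σ => σ w = v) := by
    intro w
    apply Finset.filter_congr
    intro σ _
    show σ⁻¹ v = w ↔ σ w = v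
    constructor
    · intro h; rw [← h, Equiv.Perm.apply_inv_self]
    · intro h; rw [← h, Equiv.Perm.inv_apply_self]
  have hgroup : ∑ σ ∈ A.autS, Q (σ⁻¹ v)
      = ∑ w : A.V, (A.autS.filter fun σ => σ w = v).card * Q w := by
    rw [← Finset.sum_fiberwise_of_maps_to (g := fun σ => σ⁻¹ v) (t := Finset.univ)
      (fun σ _ => Finset.mem_univ _)]
    refine Finset.sum_congr rfl fun w _ => ?_
    rw [← hfib w]
    rw [Finset.sum_congr rfl (fun σ hσ => ?_), Finset.sum_const, smul_eq_mul]
    rw [Finset.mem_filter] at hσ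
    rw [hσ.2]
  rw [hgroup, Finset.sum_mul]
  have : ∀ w : A.V, (A.autS.filter fun σ => σ w = v).card * Q w * Fintype.card A.V
      = Q w * A.autS.card := by
    intro w
    have := A.autS_card_eq hvt w v
    calc (A.autS.filter fun σ => σ w = v).card * Q w * Fintype.card A.V
        = Q w * (Fintype.card A.V * (A.autS.filter fun σ => σ w = v).card) := by ring
      _ = Q w * A.autS.card := by rw [← this]
  rw [Finset.sum_congr rfl fun w _ => this w, ← Finset.sum_mul, hQ]

end FinGraph
namespace FinGraph

open Finset

variable (A : FinGraph)

/-- The balancing map: given a `g`-tuple of `n`-tuples from `S`, produce a `g·n`-tuple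
by applying the `j`-th automorphism to the `j`-th block. -/
noncomputable def bigMap {n : ℕ} (S : Set ((A.spow n).V))
    (y : Fin A.autS.card → ((A.spow n).induceSet S).V) : Fin (A.autS.card * n) → A.V :=
  fun p => (A.autS.equivFin.symm (finProdFinEquiv.symm p).1).1
    ((y ((finProdFinEquiv.symm p).1)).1 (finProdFinEquiv.symm p).2)

lemma bigMap_apply {n : ℕ} (S : Set ((A.spow n).V))
    (y : Fin A.autS.card → ((A.spow n).induceSet S).V) (j : Fin A.autS.card) (i : Fin n) :
    A.bigMap S y (finProdFinEquiv (j, i))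
      = (A.autS.equivFin.symm j).1 ((y j).1 i) := by
  unfold bigMap
  rw [Equiv.symm_apply_apply]

lemma cnt_bigMap {n : ℕ} (S : Set ((A.spow n).V))
    (y : Fin A.autS.card → ((A.spow n).induceSet S).V) (v : A.V) :
    A.cnt (A.bigMap S y) v
      = ∑ j : Fin A.autS.card,
          A.cnt ((y j).1 : Fin n → A.V) ((A.autS.equivFin.symm j).1⁻¹ v) := by
  have h := A.cnt_block (fun j i => (A.autS.equivFin.symm j).1 ((y j).1 i)) v
  have h2 : A.cnt (A.bigMap S y) v
      = A.cnt (fun p : Fin (A.autS.card * n) =>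
          (fun (j : Fin A.autS.card) (i : Fin n) => (A.autS.equivFin.symm j).1 ((y j).1 i))
            (finProdFinEquiv.symm p).1 (finProdFinEquiv.symm p).2) v := rfl
  rw [h2, h]
  exact Finset.sum_congr rfl fun j _ => A.cnt_comp_perm _ _ _

/-- The count of every vertex in a balanced big tuple. -/
lemma cnt_bigMap_eq (hvt : IsVertexTransitive A) {n : ℕ} (Q : A.V → ℕ)
    (hQn : ∑ v, Q v = n) (S : Set ((A.spow n).V))
    (hS : ∀ x ∈ S, ∀ v, A.cnt x v = Q v)
    (y : Fin A.autS.card → ((A.spow n).induceSet S).V) (v : A.V) :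
    A.cnt (A.bigMap S y) v * Fintype.card A.V = n * A.autS.card := by
  rw [A.cnt_bigMap S y v]
  have h3 : ∀ j : Fin A.autS.card,
      A.cnt ((y j).1 : Fin n → A.V) ((A.autS.equivFin.symm j).1⁻¹ v)
        = Q ((A.autS.equivFin.symm j).1⁻¹ v) := fun j => hS (y j).1 (y j).2 _
  rw [Finset.sum_congr rfl fun j _ => h3 j]
  have h4 : ∑ j : Fin A.autS.card, Q ((A.autS.equivFin.symm j).1⁻¹ v)
      = ∑ σ ∈ A.autS, Q (σ⁻¹ v) :=
    (Equiv.sum_comp A.autS.equivFin.symm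
      (fun s : {x // x ∈ A.autS} => Q ((s : Equiv.Perm A.V)⁻¹ v))).trans
      (Finset.sum_coe_sort A.autS (fun σ => Q (σ⁻¹ v)))
  rw [h4]
  exact A.sum_autS_eq hvt Q hQn v

/-- Membership of the balanced tuple in the typical set of the uniform distribution. -/
lemma bigMap_mem_typSet (hvt : IsVertexTransitive A) (hne : Nonempty A.V)
    {ε : ℝ} (hε : 0 ≤ ε) {n : ℕ} (hn : 0 < n) (Q : A.V → ℕ) (hQn : ∑ v, Q v = n)
    (S : Set ((A.spow n).V)) (hS : ∀ x ∈ S, ∀ v, A.cnt x v = Q v)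
    (y : Fin A.autS.card → ((A.spow n).induceSet S).V) :
    A.bigMap S y ∈ A.typSet (fun _ => 1 / (Fintype.card A.V : ℝ)) ε (A.autS.card * n) := by
  have hk : 0 < Fintype.card A.V := Fintype.card_pos_iff.2 hne
  have hg : 0 < A.autS.card := Finset.card_pos.2 A.autS_nonempty
  have hemp : ∀ v, A.empDist (A.autS.card * n) (A.bigMap S y) v
      = 1 / (Fintype.card A.V : ℝ) := by
    intro v
    rw [A.empDist_eq]
    have h := A.cnt_bigMap_eq hvt Q hQn S hS y v
    have h' : (A.cnt (A.bigMap S y) v : ℝ) * (Fintype.card A.V : ℝ)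
        = (n : ℝ) * (A.autS.card : ℝ) := by
      exact_mod_cast congrArg (fun m : ℕ => (m : ℝ)) h
    have hk' : (Fintype.card A.V : ℝ) ≠ 0 := by positivity
    have hgn : ((A.autS.card * n : ℕ) : ℝ) ≠ 0 := by
      have : 0 < A.autS.card * n := Nat.mul_pos hg hn
      exact_mod_cast this.ne'
    field_simp
    push_cast
    nlinarith [h']
  show ∑ v : A.V, |A.empDist (A.autS.card * n) (A.bigMap S y) v
      - 1 / (Fintype.card A.V : ℝ)| ≤ ε
  have : ∀ v : A.V, |A.empDist (A.autS.card * n) (A.bigMap S y) v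
      - 1 / (Fintype.card A.V : ℝ)| = 0 := by
    intro v; rw [hemp v]; simp
  rw [Finset.sum_congr rfl fun v _ => this v]
  simpa using hε

/-- The key cohomomorphism. -/
lemma cohom_key (hvt : IsVertexTransitive A) (hne : Nonempty A.V)
    {ε : ℝ} (hε : 0 ≤ ε) {n : ℕ} (hn : 0 < n) (Q : A.V → ℕ) (hQn : ∑ v, Q v = n)
    (S : Set ((A.spow n).V)) (hS : ∀ x ∈ S, ∀ v, A.cnt x v = Q v) :
    cohomLE (((A.spow n).induceSet S).spow A.autS.card)
      (A.inducedTypGraph (fun _ => 1 / (Fintype.card A.V : ℝ)) ε (A.autS.card * n)) := by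
  refine ⟨⟨fun y => ⟨A.bigMap S y, A.bigMap_mem_typSet hvt hne hε hn Q hQn S hS y⟩, ?_⟩⟩
  rintro y y' ⟨hney, hnadj⟩
  obtain ⟨j, hj1, hj2⟩ : ∃ j, ¬ ((A.spow n).induceSet S).G.Adj (y j) (y' j) ∧ y j ≠ y' j := by
    by_contra hcon
    push_neg at hcon
    exact hnadj ⟨hney, fun j => or_iff_not_imp_left.2 (hcon j)⟩
  have hx_ne : ((y j).1 : Fin n → A.V) ≠ ((y' j).1 : Fin n → A.V) :=
    fun h => hj2 (Subtype.ext h)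
  have hj1' : ¬ (strongPowAdj A.G n).Adj ((y j).1 : Fin n → A.V) ((y' j).1 : Fin n → A.V) :=
    fun h => hj1 (((A.spow n).induceSet_adj S (y j) (y' j)).2 h)
  obtain ⟨i, hi⟩ : ∃ i, ¬ (A.G.Adj ((y j).1 i) ((y' j).1 i) ∨ (y j).1 i = (y' j).1 i) := by
    by_contra hcon
    push_neg at hcon
    exact hj1' ⟨hx_ne, hcon⟩
  push_neg at hi
  obtain ⟨hi1, hi2⟩ := hi
  set σ : Equiv.Perm A.V := (A.autS.equivFin.symm j).1 with hσdef
  have hσmem : σ ∈ A.autS := (A.autS.equivFin.symm j).2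
  set p : Fin (A.autS.card * n) := finProdFinEquiv (j, i) with hpdef
  have hΦ : A.bigMap S y p = σ ((y j).1 i) := A.bigMap_apply S y j i
  have hΦ' : A.bigMap S y' p = σ ((y' j).1 i) := A.bigMap_apply S y' j i
  have hne_p : A.bigMap S y p ≠ A.bigMap S y' p := by
    rw [hΦ, hΦ']
    exact fun h => hi2 (σ.injective h)
  have hnadj_p : ¬ A.G.Adj (A.bigMap S y p) (A.bigMap S y' p) := by
    rw [hΦ, hΦ']
    intro h
    exact hi1 (((A.mem_autS σ).1 hσmem _ _).1 h)
  constructor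
  · intro h
    exact hne_p (congrFun (congrArg Subtype.val h) p)
  · intro hadj
    have hadj' : (strongPowAdj A.G (A.autS.card * n)).Adj (A.bigMap S y) (A.bigMap S y') := hadj
    rcases hadj'.2 p with h | h
    · exact hnadj_p h
    · exact hne_p h

end FinGraph
namespace FinGraph

open Finset

section
variable {f : FinGraph → ℝ} (hf : f ∈ Delta)
include hf

lemma key_ineq (A : FinGraph) (hvt : IsVertexTransitive A) (hne : Nonempty A.V)
    {ε : ℝ} (hε : 0 ≤ ε) {n : ℕ} (hn : 0 < n) :
    f A ^ (A.autS.card * n)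
      ≤ ((n : ℝ) + 1) ^ (Fintype.card A.V * A.autS.card)
        * f (A.inducedTypGraph (fun _ => 1 / (Fintype.card A.V : ℝ)) ε (A.autS.card * n)) := by
  classical
  set k := Fintype.card A.V with hk
  set g := A.autS.card with hg
  set t : (A.spow n).V → (A.V → Fin (n + 1)) :=
    fun x v => ⟨A.cnt x v, Nat.lt_succ_of_le (A.cnt_le x v)⟩ with ht
  have h1 : f (A.spow n) ≤ ∑ Q : A.V → Fin (n + 1),
      f ((A.spow n).induceSet {x | t x = Q}) :=
    f_cover hf Finset.univ (A.spow n) t (fun v => Finset.mem_univ _)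
  obtain ⟨Qm, -, hQm⟩ := Finset.exists_max_image Finset.univ
    (fun Q : A.V → Fin (n + 1) => f ((A.spow n).induceSet {x | t x = Q}))
    Finset.univ_nonempty
  set M := f ((A.spow n).induceSet {x | t x = Qm}) with hM
  have hcard : (Finset.univ : Finset (A.V → Fin (n + 1))).card = (n + 1) ^ k := by
    rw [Finset.card_univ, Fintype.card_fun]
    simp
    rfl
  have h2 : f (A.spow n) ≤ ((n : ℝ) + 1) ^ k * M := by
    calc f (A.spow n) ≤ ∑ Q : A.V → Fin (n + 1), f ((A.spow n).induceSet {x | t x = Q}) := h1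
      _ ≤ (Finset.univ : Finset (A.V → Fin (n + 1))).card • M :=
          Finset.sum_le_card_nsmul _ _ _ (fun Q _ => hQm Q (Finset.mem_univ _))
      _ = ((n : ℝ) + 1) ^ k * M := by
          rw [hcard, nsmul_eq_mul]
          push_cast
          ring
  have hfA1 : 1 ≤ f A := f_one_le hf A hne
  have hfAn : (1 : ℝ) ≤ f A ^ n := one_le_pow₀ hfA1
  have hpowpos : (0 : ℝ) < ((n : ℝ) + 1) ^ k := by positivity
  have hfspow : f (A.spow n) = f A ^ n := f_spow hf A n
  have hM0 : 0 < M := by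
    rw [hfspow] at h2
    nlinarith
  have hfiber : {x : (A.spow n).V | t x = Qm}.Nonempty := by
    by_contra hcon
    rw [Set.not_nonempty_iff_eq_empty] at hcon
    have : IsEmpty ((A.spow n).induceSet {x | t x = Qm}).V := by
      rw [hcon]
      exact Set.isEmpty_coe_sort.2 rfl
    have hM0' := hM0
    rw [hM, f_empty hf _ this] at hM0'
    exact lt_irrefl _ hM0' 
  obtain ⟨x₀, hx₀⟩ := hfiber
  set Q : A.V → ℕ := fun v => (Qm v).1 with hQ
  have hQn : ∑ v, Q v = n := by
    have : ∀ v, Q v = A.cnt x₀ v := by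
      intro v
      have := congrFun hx₀ v
      exact (congrArg Fin.val this).symm
    rw [Finset.sum_congr rfl fun v _ => this v]
    exact A.sum_cnt x₀
  have hS : ∀ x ∈ {x : (A.spow n).V | t x = Qm}, ∀ v, A.cnt x v = Q v := by
    intro x hx v
    exact congrArg Fin.val (congrFun hx v)
  have hco := A.cohom_key hvt hne hε hn Q hQn {x : (A.spow n).V | t x = Qm} hS
  have h3 : M ^ g ≤ f (A.inducedTypGraph (fun _ => 1 / (k : ℝ)) ε (g * n)) := by
    have := f_mono hf hco
    rwa [f_spow hf] at this
  calc f A ^ (g * n) = (f A ^ n) ^ g := by rw [← pow_mul, mul_comm]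
    _ ≤ (((n : ℝ) + 1) ^ k * M) ^ g := by
        apply pow_le_pow_left₀ (by positivity)
        rw [← hfspow]; exact h2
    _ = ((n : ℝ) + 1) ^ (k * g) * M ^ g := by rw [mul_pow, ← pow_mul]
    _ ≤ ((n : ℝ) + 1) ^ (k * g)
          * f (A.inducedTypGraph (fun _ => 1 / (k : ℝ)) ε (g * n)) := by
        apply mul_le_mul_of_nonneg_left h3 (by positivity)

end

end FinGraph
namespace FinGraph

/-- Induced subgraphs are cohom-below the ambient graph. -/
lemma cohom_induce (B : FinGraph) (S : Set B.V) : cohomLE (B.induceSet S) B := by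
  refine ⟨⟨Subtype.val, ?_⟩⟩
  rintro a b ⟨hab, hnadj⟩
  exact ⟨fun h => hab (Subtype.ext h), fun h => hnadj h⟩

section
variable {f : FinGraph → ℝ} (hf : f ∈ Delta)
include hf

/-- Every term of the regularised sequence is at most `f A`. -/
lemma term_le (A : FinGraph) (hne : Nonempty A.V) (P : A.V → ℝ) (ε : ℝ) (n : ℕ) :
    f (A.inducedTypGraph P ε n) ^ ((1 : ℝ) / (n : ℝ)) ≤ f A := by
  have hfA1 : 1 ≤ f A := f_one_le hf A hne
  rcases Nat.eq_zero_or_pos n with rfl | hn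
  · simp only [Nat.cast_zero, div_zero, Real.rpow_zero]
    exact hfA1
  · have h1 : f (A.inducedTypGraph P ε n) ≤ f (A.spow n) := by
      rw [inducedTypGraph_eq]
      exact f_mono hf (cohom_induce _ _)
    have h2 : f (A.spow n) = f A ^ n := f_spow hf A n
    have hnn : (0 : ℝ) < (n : ℝ) := by exact_mod_cast hn
    calc f (A.inducedTypGraph P ε n) ^ ((1 : ℝ) / (n : ℝ))
        ≤ (f A ^ n) ^ ((1 : ℝ) / (n : ℝ)) := by
          apply Real.rpow_le_rpow (f_nonneg hf _) (h2 ▸ h1) (by positivity)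
      _ = f A := by
          rw [← Real.rpow_natCast (f A) n, ← Real.rpow_mul (by linarith)]
          rw [mul_one_div, div_self hnn.ne', Real.rpow_one]

lemma term_nonneg (A : FinGraph) (P : A.V → ℝ) (ε : ℝ) (n : ℕ) :
    0 ≤ f (A.inducedTypGraph P ε n) ^ ((1 : ℝ) / (n : ℝ)) :=
  Real.rpow_nonneg (f_nonneg hf _) _

end

end FinGraph
namespace FinGraph

open Real

lemma tendsto_aux (k : ℕ) :
    Filter.Tendsto (fun m : ℕ => ((m : ℝ) + 1) ^ ((k : ℝ) / (m : ℝ))) atTop (nhds 1) := by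
  have hcast : Filter.Tendsto (fun m : ℕ => (m : ℝ) + 1) atTop atTop :=
    Filter.tendsto_atTop_add_const_right _ 1 tendsto_natCast_atTop_atTop
  have h1 : Filter.Tendsto (fun m : ℕ => Real.log ((m : ℝ) + 1) / ((m : ℝ) + 1))
      atTop (nhds 0) :=
    (Real.isLittleO_log_id_atTop.tendsto_div_nhds_zero).comp hcast
  have h2 : Filter.Tendsto (fun m : ℕ => ((m : ℝ) + 1) / (m : ℝ)) atTop (nhds 1) := by
    have heq : ∀ᶠ m : ℕ in atTop, 1 + 1 / (m : ℝ) = ((m : ℝ) + 1) / (m : ℝ) := by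
      filter_upwards [Filter.eventually_ge_atTop 1] with m hm
      have : (m : ℝ) ≠ 0 := by positivity
      field_simp
    apply Filter.Tendsto.congr' heq
    have := tendsto_one_div_atTop_nhds_zero_nat (𝕜 := ℝ)
    have h := Filter.Tendsto.const_add (1 : ℝ) this
    simpa using h
  have h3 : Filter.Tendsto
      (fun m : ℕ => Real.log ((m : ℝ) + 1) * ((k : ℝ) / (m : ℝ))) atTop (nhds 0) := by
    have heq : ∀ᶠ m : ℕ in atTop,
        (k : ℝ) * (Real.log ((m : ℝ) + 1) / ((m : ℝ) + 1) * (((m : ℝ) + 1) / (m : ℝ)))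
          = Real.log ((m : ℝ) + 1) * ((k : ℝ) / (m : ℝ)) := by
      filter_upwards [Filter.eventually_ge_atTop 1] with m hm
      have hm0 : (m : ℝ) ≠ 0 := by positivity
      have hm1 : (m : ℝ) + 1 ≠ 0 := by positivity
      field_simp
    apply Filter.Tendsto.congr' heq
    have := Filter.Tendsto.const_mul (k : ℝ) (h1.mul h2)
    simpa using this
  have h4 : ∀ m : ℕ, ((m : ℝ) + 1) ^ ((k : ℝ) / (m : ℝ))
      = Real.exp (Real.log ((m : ℝ) + 1) * ((k : ℝ) / (m : ℝ))) := by
    intro m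
    exact Real.rpow_def_of_pos (by positivity) _
  simp only [h4]
  have := (Real.continuous_exp.tendsto 0).comp h3
  rwa [Real.exp_zero] at this

section
variable {f : FinGraph → ℝ} (hf : f ∈ Delta)
include hf

lemma limsup_lower (A : FinGraph) (hvt : IsVertexTransitive A) (hne : Nonempty A.V)
    {ε : ℝ} (hε : 0 < ε) :
    f A ≤ Filter.limsup
      (fun n : ℕ => f (A.inducedTypGraph (fun _ => 1 / (Fintype.card A.V : ℝ)) ε n)
        ^ ((1 : ℝ) / (n : ℝ))) Filter.atTop := by
  classical
  set k := Fintype.card A.V with hk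
  set g := A.autS.card with hg
  have hg1 : 1 ≤ g := Finset.card_pos.2 A.autS_nonempty
  set U : A.V → ℝ := fun _ => 1 / (k : ℝ) with hU
  set a : ℕ → ℝ := fun n => f (A.inducedTypGraph U ε n) ^ ((1 : ℝ) / (n : ℝ)) with ha
  have hbdd : Filter.IsBoundedUnder (· ≤ ·) Filter.atTop a :=
    Filter.isBoundedUnder_of ⟨f A, fun n => term_le hf A hne U ε n⟩
  have hfA1 : 1 ≤ f A := f_one_le hf A hne
  -- key estimate
  have hkey : ∀ m : ℕ, 1 ≤ m → f A / ((m : ℝ) + 1) ^ ((k : ℝ) / (m : ℝ)) ≤ a (g * m) := by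
    intro m hm
    have hm0 : (0 : ℝ) < (m : ℝ) := by exact_mod_cast hm
    have hgm : 0 < g * m := Nat.mul_pos hg1 hm
    have hgm0 : (0 : ℝ) < ((g * m : ℕ) : ℝ) := by exact_mod_cast hgm
    have hKI := key_ineq hf A hvt hne hε.le hm
    set F := f (A.inducedTypGraph U ε (g * m)) with hF
    have hF0 : 0 ≤ F := f_nonneg hf _
    set D : ℝ := ((m : ℝ) + 1) ^ (k * g) with hD
    have hD0 : (0 : ℝ) < D := by positivity
    have hFlow : f A ^ (g * m) / D ≤ F := by
      rw [div_le_iff₀ hD0, mul_comm F D]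
      exact hKI
    have hstep : (f A ^ (g * m) / D) ^ ((1 : ℝ) / ((g * m : ℕ) : ℝ)) ≤ a (g * m) := by
      apply Real.rpow_le_rpow (by positivity) hFlow (by positivity)
    refine le_trans (le_of_eq ?_) hstep
    have e1 : (f A ^ (g * m) / D) ^ ((1 : ℝ) / ((g * m : ℕ) : ℝ))
        = (f A ^ (g * m)) ^ ((1 : ℝ) / ((g * m : ℕ) : ℝ))
          / D ^ ((1 : ℝ) / ((g * m : ℕ) : ℝ)) :=
      Real.div_rpow (by positivity) hD0.le _
    have e2 : (f A ^ (g * m)) ^ ((1 : ℝ) / ((g * m : ℕ) : ℝ)) = f A := by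
      rw [← Real.rpow_natCast (f A) (g * m), ← Real.rpow_mul (by linarith)]
      rw [mul_one_div, div_self hgm0.ne', Real.rpow_one]
    have e3 : D ^ ((1 : ℝ) / ((g * m : ℕ) : ℝ)) = ((m : ℝ) + 1) ^ ((k : ℝ) / (m : ℝ)) := by
      rw [hD, ← Real.rpow_natCast ((m : ℝ) + 1) (k * g), ← Real.rpow_mul (by positivity)]
      congr 1
      have hgR : (0 : ℝ) < (g : ℝ) := by exact_mod_cast hg1
      push_cast
      field_simp
    rw [e1, e2, e3]
  -- conclude via frequently
  have hfreq : ∀ c : ℝ, c < f A → c ≤ Filter.limsup a Filter.atTop := by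
    intro c hc
    have htend : Filter.Tendsto (fun m : ℕ => f A / ((m : ℝ) + 1) ^ ((k : ℝ) / (m : ℝ)))
        atTop (nhds (f A)) := by
      have := Filter.Tendsto.div (tendsto_const_nhds (x := f A)) (tendsto_aux k) one_ne_zero
      rwa [div_one] at this
    have hev := htend.eventually_const_lt hc
    rw [Filter.eventually_atTop] at hev
    obtain ⟨m₀, hm₀⟩ := hev
    have hfr : ∃ᶠ n in Filter.atTop, c ≤ a n := by
      rw [Filter.frequently_atTop]
      intro N
      set m := max 1 (max N m₀) with hm
      have hm1 : 1 ≤ m := le_max_left _ _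
      have hmN : N ≤ m := le_trans (le_max_left _ _) (le_max_right _ _)
      have hmm0 : m₀ ≤ m := le_trans (le_max_right _ _) (le_max_right _ _)
      refine ⟨g * m, ?_, ?_⟩
      · calc N ≤ m := hmN
          _ = 1 * m := (one_mul m).symm
          _ ≤ g * m := Nat.mul_le_mul_right m hg1
      · exact le_trans (hm₀ m hmm0).le (hkey m hm1)
    exact Filter.le_limsup_of_frequently_le hfr hbdd
  by_contra hcon
  push_neg at hcon
  obtain ⟨c, hc1, hc2⟩ := exists_between hcon
  exact absurd (hfreq c hc2) (not_le.2 hc1)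

end

end FinGraph

/-- For a non-empty vertex-transitive graph `G`, any spectral point `f ∈ Δ(𝒢)` satisfies
`f(G) = f(G, U)`, where `U` is the uniform distribution on the vertices. -/
theorem spectral_point_eq_probRefine_uniform (A : FinGraph) (hne : Nonempty A.V)
    (hvt : IsVertexTransitive A) (f : FinGraph → ℝ) (hf : f ∈ Delta) :
    f A = A.probRefine f (fun _ => 1 / (Fintype.card A.V : ℝ)) := by
  unfold probRefine
  set U : A.V → ℝ := fun _ => 1 / (Fintype.card A.V : ℝ) with hU
  have hterm_le : ∀ (ε : ℝ) (n : ℕ),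
      f (A.inducedTypGraph U ε n) ^ ((1 : ℝ) / (n : ℝ)) ≤ f A :=
    fun ε n => term_le hf A hne U ε n
  have hterm_nonneg : ∀ (ε : ℝ) (n : ℕ),
      0 ≤ f (A.inducedTypGraph U ε n) ^ ((1 : ℝ) / (n : ℝ)) :=
    fun ε n => term_nonneg hf A U ε n
  have hbdd : ∀ ε : ℝ, Filter.IsBoundedUnder (· ≤ ·) Filter.atTop
      (fun n : ℕ => f (A.inducedTypGraph U ε n) ^ ((1 : ℝ) / (n : ℝ))) :=
    fun ε => Filter.isBoundedUnder_of ⟨f A, hterm_le ε⟩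
  have hcobdd : ∀ ε : ℝ, Filter.IsCoboundedUnder (· ≤ ·) Filter.atTop
      (fun n : ℕ => f (A.inducedTypGraph U ε n) ^ ((1 : ℝ) / (n : ℝ))) := by
    intro ε
    exact (Filter.isBoundedUnder_of ⟨0, hterm_nonneg ε⟩ :
      Filter.IsBoundedUnder (· ≥ ·) Filter.atTop _).isCoboundedUnder_flip
  apply le_antisymm
  · apply le_ciInf
    intro ε
    exact limsup_lower hf A hvt hne ε.2
  · have hbddBelow : BddBelow (Set.range fun ε : {e : ℝ // 0 < e} =>
        Filter.limsup (fun n : ℕ => f (A.inducedTypGraph U ε.1 n) ^ ((1 : ℝ) / (n : ℝ)))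
          Filter.atTop) := by
      refine ⟨0, ?_⟩
      rintro x ⟨ε, rfl⟩
      exact Filter.le_limsup_of_frequently_le
        ((Filter.Eventually.of_forall (hterm_nonneg ε.1)).frequently) (hbdd ε.1)
    calc (⨅ ε : {e : ℝ // 0 < e},
          Filter.limsup (fun n : ℕ => f (A.inducedTypGraph U ε.1 n) ^ ((1 : ℝ) / (n : ℝ)))
            Filter.atTop)
        ≤ Filter.limsup
            (fun n : ℕ => f (A.inducedTypGraph U (1 : ℝ) n) ^ ((1 : ℝ) / (n : ℝ)))
            Filter.atTop := ciInf_le hbddBelow ⟨1, one_pos⟩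
      _ ≤ f A := Filter.limsup_le_of_le (hcobdd 1)
          (Filter.Eventually.of_forall (hterm_le 1))
end
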